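/- arXiv:2507.16031 — 9 statements merged into one kernel-verified Lean document; each statement's English description precedes it below -/
import Mathlib

section
/- Let Δ ≥ 0 and let V = (V_1, …, V_n) be a random vector whose law is a Δ-MRF distribution on Ω = Ω_1 × ⋯ × Ω_n. Then for every index i ∈ [n], every subset E_i ⊆ Ω_i, and every subset E_{-i} ⊆ ∏_{j≠i} Ω_j with Pr[V_{-i} ∈ E_{-i}] > 0, we have e^{-4Δ}·Pr[V_i ∈ E_i] ≤ Pr[V_i ∈ E_i | V_{-i} ∈ E_{-i}] ≤ e^{4Δ}·Pr[V_i ∈ E_i], where V_{-i} denotes the vector of coordinates of V other than i. -/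
/-- A Markov Random Field on `Ω = Ω 0 × ⋯ × Ω (n-1)`: a set of hyperedges,
vertex potentials, and edge potentials, where each edge potential depends only
on the coordinates in that edge. -/
structure MRF (n : ℕ) (Ω : Fin n → Type) [∀ i, Fintype (Ω i)] where
  edges : Finset (Finset (Fin n))
  vertexPot : ∀ i : Fin n, Ω i → ℝ
  edgePot : Finset (Fin n) → (∀ i, Ω i) → ℝ
  edgePot_local : ∀ e ∈ edges, ∀ u v : ∀ i, Ω i,
    (∀ i ∈ e, u i = v i) → edgePot e u = edgePot e v

namespace MRF

variable {n : ℕ} {Ω : Fin n → Type} [∀ i, Fintype (Ω i)]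

/-- The unnormalized Gibbs weight of a configuration. -/
noncomputable def weight (M : MRF n Ω) (u : ∀ i, Ω i) : ℝ :=
  Real.exp (∑ i, M.vertexPot i (u i) + ∑ e ∈ M.edges, M.edgePot e u)

/-- The probability distribution induced by the MRF: `Pr[V = u] ∝ weight u`. -/
noncomputable def dist (M : MRF n Ω) (u : ∀ i, Ω i) : ℝ :=
  M.weight u / ∑ v, M.weight v

/-- The maximum weighted degree of the MRF is at most `Δ`. -/
def DegreeLE (M : MRF n Ω) (Δ : ℝ) : Prop :=
  ∀ (i : Fin n) (u : ∀ i, Ω i),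
    |∑ e ∈ M.edges.filter (fun e => i ∈ e), M.edgePot e u| ≤ Δ

end MRF

/-- `D` is a `Δ`-MRF distribution. -/
def IsMRFDist {n : ℕ} {Ω : Fin n → Type} [∀ i, Fintype (Ω i)]
    (Δ : ℝ) (D : (∀ i, Ω i) → ℝ) : Prop :=
  ∃ M : MRF n Ω, M.DegreeLE Δ ∧ D = M.dist

lemma mrf_key {n : ℕ} {Ω : Fin n → Type} [∀ i, Fintype (Ω i)]
    (M : MRF n Ω) {Δ : ℝ} (hdeg : M.DegreeLE Δ) (i : Fin n)
    (u v : ∀ j, Ω j) :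
    M.weight u * M.weight v ≤ Real.exp (4 * Δ) *
      (M.weight (Function.update u i (v i)) * M.weight (Function.update v i (u i))) := by
  classical
  rw [MRF.weight, MRF.weight, MRF.weight, MRF.weight, ← Real.exp_add, ← Real.exp_add,
    ← Real.exp_add]
  apply Real.exp_le_exp.2
  have hvert : ∑ j, M.vertexPot j (u j) + ∑ j, M.vertexPot j (v j)
      = ∑ j, M.vertexPot j (Function.update u i (v i) j)
        + ∑ j, M.vertexPot j (Function.update v i (u i) j) := by
    rw [← Finset.sum_add_distrib, ← Finset.sum_add_distrib]
    refine Finset.sum_congr rfl fun j _ => ?_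
    by_cases h : j = i
    · subst h; simp; ring
    · simp [Function.update_of_ne h]
  have hsplit : ∀ w : ∀ j, Ω j, ∑ e ∈ M.edges, M.edgePot e w
      = (∑ e ∈ M.edges.filter (fun e => i ∈ e), M.edgePot e w)
        + ∑ e ∈ M.edges.filter (fun e => ¬ i ∈ e), M.edgePot e w :=
    fun w => (Finset.sum_filter_add_sum_filter_not _ _ _).symm
  have hloc : ∀ (w : ∀ j, Ω j) (x : Ω i),
      ∑ e ∈ M.edges.filter (fun e => ¬ i ∈ e), M.edgePot e (Function.update w i x)
      = ∑ e ∈ M.edges.filter (fun e => ¬ i ∈ e), M.edgePot e w := by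
    intro w x
    refine Finset.sum_congr rfl fun e he => ?_
    rw [Finset.mem_filter] at he
    exact M.edgePot_local e he.1 _ _ fun j hj =>
      Function.update_of_ne (fun h => he.2 (by rw [← h]; exact hj)) _ _
  have h1 := abs_le.1 (hdeg i u)
  have h2 := abs_le.1 (hdeg i v)
  have h3 := abs_le.1 (hdeg i (Function.update u i (v i)))
  have h4 := abs_le.1 (hdeg i (Function.update v i (u i)))
  have hu' := hloc u (v i)
  have hv' := hloc v (u i)
  rw [hsplit u, hsplit v, hsplit (Function.update u i (v i)),
    hsplit (Function.update v i (u i))]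
  linarith [hvert]

lemma mrf_prod_sum_le {n : ℕ} {Ω : Fin n → Type} [∀ i, Fintype (Ω i)]
    [∀ i, DecidableEq (Ω i)]
    (M : MRF n Ω) {Δ : ℝ} (hdeg : M.DegreeLE Δ) (i : Fin n)
    (A B A' B' : Finset (∀ j, Ω j))
    (hA : ∀ u ∈ A, ∀ v ∈ B, Function.update u i (v i) ∈ A')
    (hB : ∀ u ∈ A, ∀ v ∈ B, Function.update v i (u i) ∈ B') :
    (∑ u ∈ A, M.weight u) * (∑ v ∈ B, M.weight v)
      ≤ Real.exp (4 * Δ) * ((∑ u ∈ A', M.weight u) * (∑ v ∈ B', M.weight v)) := by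
  classical
  set f : ((∀ j, Ω j) × (∀ j, Ω j)) → ((∀ j, Ω j) × (∀ j, Ω j)) :=
    fun p => (Function.update p.1 i (p.2 i), Function.update p.2 i (p.1 i)) with hf
  have hinv : ∀ p, f (f p) = p := by
    intro p
    simp only [hf, Function.update_self, Function.update_idem, Function.update_eq_self]
  have hinj : Function.Injective f := Function.LeftInverse.injective hinv
  rw [Finset.sum_mul_sum, Finset.sum_mul_sum, ← Finset.sum_product', ← Finset.sum_product']
  calc ∑ p ∈ A ×ˢ B, M.weight p.1 * M.weight p.2
      ≤ ∑ p ∈ A ×ˢ B, Real.exp (4 * Δ) * (M.weight (f p).1 * M.weight (f p).2) :=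
        Finset.sum_le_sum fun p _ => mrf_key M hdeg i p.1 p.2
    _ = Real.exp (4 * Δ) * ∑ p ∈ A ×ˢ B, M.weight (f p).1 * M.weight (f p).2 := by
        rw [Finset.mul_sum]
    _ = Real.exp (4 * Δ) * ∑ q ∈ (A ×ˢ B).image f, M.weight q.1 * M.weight q.2 := by
        rw [Finset.sum_image fun x _ y _ h => hinj h]
    _ ≤ Real.exp (4 * Δ) * ∑ q ∈ A' ×ˢ B', M.weight q.1 * M.weight q.2 := by
        refine mul_le_mul_of_nonneg_left
          (Finset.sum_le_sum_of_subset_of_nonneg ?_ fun q _ _ =>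
            mul_nonneg (Real.exp_pos _).le (Real.exp_pos _).le) (Real.exp_pos _).le
        intro q hq
        rw [Finset.mem_image] at hq
        obtain ⟨p, hp, rfl⟩ := hq
        rw [Finset.mem_product] at hp ⊢
        exact ⟨hA p.1 hp.1 p.2 hp.2, hB p.1 hp.1 p.2 hp.2⟩


/-- If `V ∼ D` for a `Δ`-MRF distribution `D`, then for any
coordinate `i`, any event `Ei` on coordinate `i`, and any event `Emi` not
depending on coordinate `i` with `Pr[V ∈ Emi] > 0`, we have
`e^{-4Δ}·Pr[Vᵢ ∈ Ei] ≤ Pr[Vᵢ ∈ Ei ∣ V ∈ Emi] ≤ e^{4Δ}·Pr[Vᵢ ∈ Ei]`. -/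
theorem mrf_conditioned_bound
    {n : ℕ} {Ω : Fin n → Type} [∀ i, Fintype (Ω i)] [∀ i, Nonempty (Ω i)]
    [∀ i, DecidableEq (Ω i)]
    (Δ : ℝ) (hΔ : 0 ≤ Δ) (D : (∀ i, Ω i) → ℝ) (hD : IsMRFDist Δ D)
    (i : Fin n) (Ei : Finset (Ω i)) (Emi : Finset (∀ j, Ω j))
    (hEmi : ∀ u v : ∀ j, Ω j, (∀ j, j ≠ i → u j = v j) → (u ∈ Emi ↔ v ∈ Emi))
    (hpos : 0 < ∑ u ∈ Emi, D u) :
    Real.exp (-(4 * Δ)) * (∑ u ∈ Finset.univ.filter (fun u => u i ∈ Ei), D u)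
        ≤ (∑ u ∈ Emi.filter (fun u => u i ∈ Ei), D u) / (∑ u ∈ Emi, D u)
      ∧ (∑ u ∈ Emi.filter (fun u => u i ∈ Ei), D u) / (∑ u ∈ Emi, D u)
        ≤ Real.exp (4 * Δ) * (∑ u ∈ Finset.univ.filter (fun u => u i ∈ Ei), D u) := by
  classical
  obtain ⟨M, hdeg, rfl⟩ := hD
  have hT : ∀ T : Finset (∀ j, Ω j),
      ∑ u ∈ T, M.dist u = (∑ u ∈ T, M.weight u) / (∑ v, M.weight v) := by
    intro T; rw [Finset.sum_div]; rfl
  set A : ℝ := ∑ u ∈ Finset.univ.filter (fun u => u i ∈ Ei), M.weight u with hA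
  set Z : ℝ := ∑ v, M.weight v with hZdef
  set C : ℝ := ∑ u ∈ Emi.filter (fun u => u i ∈ Ei), M.weight u with hC
  set S : ℝ := ∑ u ∈ Emi, M.weight u with hSdef
  have hZ : 0 < Z := Finset.sum_pos (fun u _ => Real.exp_pos _) Finset.univ_nonempty
  have hS : 0 < S := by
    rw [hT] at hpos
    have := mul_pos hpos hZ
    rwa [div_mul_cancel₀ _ hZ.ne'] at this
  rw [hT, hT, hT]
  have hq : (C / Z) / (S / Z) = C / S := by
    field_simp
  rw [hq]
  -- key inequalities
  have key1 : C * Z ≤ Real.exp (4 * Δ) * (S * A) := by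
    refine mrf_prod_sum_le M hdeg i (Emi.filter (fun u => u i ∈ Ei)) Finset.univ Emi
      (Finset.univ.filter (fun u => u i ∈ Ei)) ?_ ?_
    · intro u hu v _
      rw [Finset.mem_filter] at hu
      exact (hEmi (Function.update u i (v i)) u
        (fun j hj => Function.update_of_ne hj _ _)).2 hu.1
    · intro u hu v _
      rw [Finset.mem_filter] at hu
      rw [Finset.mem_filter]
      exact ⟨Finset.mem_univ _, by simpa using hu.2⟩
  have key2 : A * S ≤ Real.exp (4 * Δ) * (Z * C) := by
    refine mrf_prod_sum_le M hdeg i (Finset.univ.filter (fun u => u i ∈ Ei)) Emi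
      Finset.univ (Emi.filter (fun u => u i ∈ Ei)) ?_ ?_
    · intro u _ v _; exact Finset.mem_univ _
    · intro u hu v hv
      rw [Finset.mem_filter] at hu
      rw [Finset.mem_filter]
      refine ⟨(hEmi (Function.update v i (u i)) v
        (fun j hj => Function.update_of_ne hj _ _)).2 hv, by simpa using hu.2⟩
  constructor
  · rw [Real.exp_neg, inv_mul_le_iff₀ (Real.exp_pos _), ← mul_div_assoc,
      div_le_div_iff₀ hZ hS]
    linarith [key2]
  · rw [← mul_div_assoc, div_le_div_iff₀ hS hZ]
    linarith [key1]
end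

section
/- Let X = (X_1, …, X_n) be a random vector on Ω = Ω_1 × ⋯ × Ω_n whose law is a time-dependent Markov chain: for every ω ∈ Ω and every 2 ≤ i ≤ n with Pr[X_1 = ω_1, …, X_{i-1} = ω_{i-1}] > 0, one has Pr[X_i = ω_i | X_j = ω_j for all j < i] = Pr[X_i = ω_i | X_{i-1} = ω_{i-1}]. Then for every ε ∈ (0,1), setting Δ := 2·log(n·(max_{i∈[n]} |Ω_i|)/ε), there exists a Δ-MRF distribution D_M on Ω such that Pr_{Y ∼ D_M}[Y = ω] ≥ (1 - ε)·Pr[X = ω] for every ω ∈ Ω. -/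
set_option linter.unusedSectionVars false

namespace MarkovMRF

variable {n : ℕ} {Ω : Fin n → Type} [∀ i, Fintype (Ω i)] [∀ i, Nonempty (Ω i)]
  [∀ i, DecidableEq (Ω i)]

def prev (i : Fin n) : Fin n := ⟨(i : ℕ) - 1, lt_of_le_of_lt (Nat.sub_le _ _) i.isLt⟩

variable (D : (∀ i, Ω i) → ℝ)

noncomputable def marg (i : Fin n) (a : Ω i) : ℝ := ∑ u, if u i = a then D u else 0

noncomputable def jnt (j i : Fin n) (a : Ω j) (b : Ω i) : ℝ :=
  ∑ u, if u i = b ∧ u j = a then D u else 0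

noncomputable def condp (j i : Fin n) (a : Ω j) (b : Ω i) : ℝ := jnt D j i a b / marg D j a

noncomputable def F (i : Fin n) (u : ∀ i, Ω i) : ℝ :=
  if (i : ℕ) = 0 then marg D i (u i) else condp D (prev i) i (u (prev i)) (u i)

noncomputable def G (δ : ℝ) (i : Fin n) (u : ∀ i, Ω i) : ℝ := max (F D i u) δ

theorem marg_nonneg (hD0 : ∀ u, 0 ≤ D u) (i : Fin n) (a : Ω i) : 0 ≤ marg D i a :=
  Finset.sum_nonneg fun u _ => by split; exacts [hD0 u, le_rfl]

theorem jnt_nonneg (hD0 : ∀ u, 0 ≤ D u) (j i : Fin n) (a : Ω j) (b : Ω i) : 0 ≤ jnt D j i a b :=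
  Finset.sum_nonneg fun u _ => by split; exacts [hD0 u, le_rfl]

theorem jnt_le_marg (hD0 : ∀ u, 0 ≤ D u) (j i : Fin n) (a : Ω j) (b : Ω i) :
    jnt D j i a b ≤ marg D j a := by
  refine Finset.sum_le_sum fun u _ => ?_
  split
  · rename_i h; rw [if_pos h.2]
  · split
    · exact hD0 u
    · exact le_rfl

theorem marg_le_one (hD0 : ∀ u, 0 ≤ D u) (hD1 : ∑ u, D u = 1) (i : Fin n) (a : Ω i) :
    marg D i a ≤ 1 := by
  rw [← hD1]
  refine Finset.sum_le_sum fun u _ => ?_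
  split; exacts [le_rfl, hD0 u]

theorem condp_nonneg (hD0 : ∀ u, 0 ≤ D u) (j i : Fin n) (a : Ω j) (b : Ω i) :
    0 ≤ condp D j i a b :=
  div_nonneg (jnt_nonneg D hD0 j i a b) (marg_nonneg D hD0 j a)

theorem condp_le_one (hD0 : ∀ u, 0 ≤ D u) (j i : Fin n) (a : Ω j) (b : Ω i) :
    condp D j i a b ≤ 1 :=
  div_le_one_of_le₀ (jnt_le_marg D hD0 j i a b) (marg_nonneg D hD0 j a)

theorem sum_jnt (j i : Fin n) (a : Ω j) : ∑ b, jnt D j i a b = marg D j a := by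
  unfold jnt marg
  rw [Finset.sum_comm]
  refine Finset.sum_congr rfl fun u _ => ?_
  by_cases h : u j = a <;> simp [h]

theorem sum_condp_le_one (j i : Fin n) (a : Ω j) : ∑ b, condp D j i a b ≤ 1 := by
  unfold condp
  rw [← Finset.sum_div, sum_jnt]
  exact div_self_le_one _

theorem sum_marg (hD1 : ∑ u, D u = 1) (i : Fin n) : ∑ a, marg D i a = 1 := by
  unfold marg
  rw [Finset.sum_comm]
  simp [hD1]

theorem F_nonneg (hD0 : ∀ u, 0 ≤ D u) (i : Fin n) (u : ∀ i, Ω i) : 0 ≤ F D i u := by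
  unfold F; split
  · exact marg_nonneg D hD0 _ _
  · exact condp_nonneg D hD0 _ _ _ _

theorem F_le_one (hD0 : ∀ u, 0 ≤ D u) (hD1 : ∑ u, D u = 1) (i : Fin n) (u : ∀ i, Ω i) :
    F D i u ≤ 1 := by
  unfold F; split
  · exact marg_le_one D hD0 hD1 _ _
  · exact condp_le_one D hD0 _ _ _ _

theorem sum_update (k : Fin n) (H : (∀ i, Ω i) → ℝ) :
    ∑ u : ∀ i, Ω i, ∑ b : Ω k, H (Function.update u k b)
      = (Fintype.card (Ω k) : ℝ) * ∑ u, H u := by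
  classical
  have key : ∀ (u : ∀ i, Ω i) (b : Ω k),
      Function.update u k b = (Equiv.piSplitAt k Ω).symm (b, ((Equiv.piSplitAt k Ω) u).2) := by
    intro u b
    funext j
    by_cases h : j = k
    · subst h; simp [Equiv.piSplitAt_symm_apply]
    · simp [Equiv.piSplitAt_symm_apply, h, Function.update_of_ne h, Equiv.piSplitAt]
  calc ∑ u : ∀ i, Ω i, ∑ b : Ω k, H (Function.update u k b)
      = ∑ p : Ω k × (∀ j : {j // j ≠ k}, Ω j), ∑ b : Ω k,
          H (Function.update ((Equiv.piSplitAt k Ω).symm p) k b) := by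
        rw [← Equiv.sum_comp (Equiv.piSplitAt k Ω).symm]
    _ = ∑ p : Ω k × (∀ j : {j // j ≠ k}, Ω j), ∑ b : Ω k,
          H ((Equiv.piSplitAt k Ω).symm (b, p.2)) := by
        refine Finset.sum_congr rfl fun p _ => Finset.sum_congr rfl fun b _ => ?_
        rw [key]
        simp
    _ = ∑ a : Ω k, ∑ p : Ω k × (∀ j : {j // j ≠ k}, Ω j),
          H ((Equiv.piSplitAt k Ω).symm p) := by
        rw [Fintype.sum_prod_type]
        refine Finset.sum_congr rfl fun a _ => ?_
        rw [Fintype.sum_prod_type]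
        exact Finset.sum_comm
    _ = (Fintype.card (Ω k) : ℝ) * ∑ u, H u := by
        rw [Equiv.sum_comp (Equiv.piSplitAt k Ω).symm H]
        simp [Finset.sum_const, Finset.card_univ, nsmul_eq_mul]


noncomputable def prefixP (m : ℕ) (ω : ∀ i, Ω i) : ℝ :=
  ∑ u, if ∀ k : Fin n, (k : ℕ) ≤ m → u k = ω k then D u else 0

theorem prefixP_nonneg (hD0 : ∀ u, 0 ≤ D u) (m : ℕ) (ω : ∀ i, Ω i) : 0 ≤ prefixP D m ω :=
  Finset.sum_nonneg fun u _ => by split; exacts [hD0 u, le_rfl]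

theorem prefixP_succ_le (hD0 : ∀ u, 0 ≤ D u) (m : ℕ) (ω : ∀ i, Ω i) :
    prefixP D (m + 1) ω ≤ prefixP D m ω := by
  refine Finset.sum_le_sum fun u _ => ?_
  split
  · rename_i h
    rw [if_pos fun k hk => h k (by omega)]
  · split; exacts [hD0 u, le_rfl]

theorem prefixP_le (hD0 : ∀ u, 0 ≤ D u)
    (hmarkov : ∀ (ω : ∀ i, Ω i) (i j : Fin n), (j : ℕ) + 1 = (i : ℕ) →
      0 < (∑ u, if ∀ k, k < i → u k = ω k then D u else 0) →
      (∑ u, if u i = ω i ∧ ∀ k, k < i → u k = ω k then D u else 0) /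
          (∑ u, if ∀ k, k < i → u k = ω k then D u else 0)
        = (∑ u, if u i = ω i ∧ u j = ω j then D u else 0) /
          (∑ u, if u j = ω j then D u else 0))
    (ω : ∀ i, Ω i) :
    ∀ m, m < n →
      prefixP D m ω ≤ ∏ i ∈ Finset.univ.filter (fun i : Fin n => (i : ℕ) ≤ m), F D i ω := by
  intro m
  induction m with
  | zero =>
    intro hm
    have hset : Finset.univ.filter (fun i : Fin n => (i : ℕ) ≤ 0) = {(⟨0, hm⟩ : Fin n)} := by
      ext i
      simp only [Finset.mem_filter, Finset.mem_univ, true_and, Finset.mem_singleton, Fin.ext_iff]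
      omega
    rw [hset, Finset.prod_singleton]
    have heq : prefixP D 0 ω = F D ⟨0, hm⟩ ω := by
      have : F D ⟨0, hm⟩ ω = marg D ⟨0, hm⟩ (ω ⟨0, hm⟩) := by simp [F]
      rw [this]
      refine Finset.sum_congr rfl fun u _ => if_congr ?_ rfl rfl
      constructor
      · intro h; exact h ⟨0, hm⟩ le_rfl
      · intro h k hk
        have : k = ⟨0, hm⟩ := Fin.ext (by simp; omega)
        rwa [this]
    rw [heq]
  | succ m ih =>
    intro hm
    have hm' : m < n := by omega
    set i : Fin n := ⟨m + 1, hm⟩ with hi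
    set j : Fin n := ⟨m, hm'⟩ with hj
    have hprev : prev i = j := by simp [prev, Fin.ext_iff, hi, hj]
    have hine : i ∉ Finset.univ.filter (fun i : Fin n => (i : ℕ) ≤ m) := by simp [hi]
    have hsplit : Finset.univ.filter (fun i : Fin n => (i : ℕ) ≤ m + 1)
        = insert i (Finset.univ.filter (fun i : Fin n => (i : ℕ) ≤ m)) := by
      ext l
      simp [Finset.mem_insert, Fin.ext_iff, hi]
      omega
    rw [hsplit, Finset.prod_insert hine]
    have hA : prefixP D (m + 1) ω
        = ∑ u, if u i = ω i ∧ ∀ k, k < i → u k = ω k then D u else 0 := by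
      refine Finset.sum_congr rfl fun u _ => if_congr ?_ rfl rfl
      constructor
      · intro h
        exact ⟨h i (by simp [hi]), fun k hk => h k (by rw [Fin.lt_def] at hk; simp [hi] at hk ⊢; omega)⟩
      · intro h k hk
        rcases Nat.lt_or_ge (k : ℕ) (m + 1) with h1 | h1
        · exact h.2 k (by rw [Fin.lt_def]; simpa)
        · have : k = i := Fin.ext (by simp [hi]; omega)
          rw [this]; exact h.1
    have hB : prefixP D m ω = ∑ u, if ∀ k, k < i → u k = ω k then D u else 0 := by
      refine Finset.sum_congr rfl fun u _ => if_congr ?_ rfl rfl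
      constructor
      · intro h k hk
        exact h k (by rw [Fin.lt_def] at hk; simp [hi] at hk; omega)
      · intro h k hk
        exact h k (by rw [Fin.lt_def]; simp [hi]; omega)
    rcases eq_or_lt_of_le (prefixP_nonneg D hD0 m ω) with h0 | h0
    · have h1 : prefixP D (m + 1) ω ≤ 0 := by
        rw [h0]; exact prefixP_succ_le D hD0 m ω
      refine le_trans h1 (mul_nonneg (F_nonneg D hD0 _ _) (Finset.prod_nonneg fun l _ =>
        F_nonneg D hD0 _ _))
    · have hpos : 0 < ∑ u, if ∀ k, k < i → u k = ω k then D u else 0 := by rw [← hB]; exact h0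
      have hmk := hmarkov ω i j (by simp [hi, hj]) hpos
      have hFi : F D i ω = condp D j i (ω j) (ω i) := by
        rw [F, if_neg (by simp), hprev]
      have hcond : (∑ u, if u i = ω i ∧ u j = ω j then D u else 0) /
          (∑ u, if u j = ω j then D u else 0) = condp D j i (ω j) (ω i) := rfl
      rw [hcond] at hmk
      rw [← hB] at hmk
      have heq : prefixP D (m + 1) ω = condp D j i (ω j) (ω i) * prefixP D m ω := by
        rw [hA, ← hmk, div_mul_cancel₀]
        exact ne_of_gt h0
      rw [heq, hFi]
      exact mul_le_mul_of_nonneg_left (ih hm') (condp_nonneg D hD0 _ _ _ _)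


theorem D_le_prod (hn : 1 ≤ n) (hD0 : ∀ u, 0 ≤ D u)
    (hmarkov : ∀ (ω : ∀ i, Ω i) (i j : Fin n), (j : ℕ) + 1 = (i : ℕ) →
      0 < (∑ u, if ∀ k, k < i → u k = ω k then D u else 0) →
      (∑ u, if u i = ω i ∧ ∀ k, k < i → u k = ω k then D u else 0) /
          (∑ u, if ∀ k, k < i → u k = ω k then D u else 0)
        = (∑ u, if u i = ω i ∧ u j = ω j then D u else 0) /
          (∑ u, if u j = ω j then D u else 0))
    (ω : ∀ i, Ω i) : D ω ≤ ∏ i, F D i ω := by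
  have h := prefixP_le D hD0 hmarkov ω (n - 1) (by omega)
  have h1 : prefixP D (n - 1) ω = D ω := by
    have : ∀ u : ∀ i, Ω i, (∀ k : Fin n, (k : ℕ) ≤ n - 1 → u k = ω k) ↔ u = ω := by
      intro u
      constructor
      · intro hk; funext k; exact hk k (by omega)
      · intro hu k _; rw [hu]
    unfold prefixP
    calc (∑ u, if ∀ k : Fin n, (k : ℕ) ≤ n - 1 → u k = ω k then D u else 0)
        = ∑ u, if u = ω then D u else 0 :=
          Finset.sum_congr rfl fun u _ => if_congr (this u) rfl rfl
      _ = D ω := by rw [Finset.sum_ite_eq' Finset.univ ω D]; simp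
  have h2 : Finset.univ.filter (fun i : Fin n => (i : ℕ) ≤ n - 1) = Finset.univ := by
    ext l; simp; omega
  rw [h1, h2] at h
  exact h

theorem Zbound (hD0 : ∀ u, 0 ≤ D u) (hD1 : ∑ u, D u = 1) (δ : ℝ) (hδ : 0 < δ)
    (q : ℕ) (hq : ∀ i, Fintype.card (Ω i) ≤ q) :
    ∀ m, m ≤ n →
      ∑ u, ∏ i ∈ Finset.univ.filter (fun i : Fin n => (i : ℕ) < m), (F D i u + δ)
        ≤ (1 + δ * q) ^ m
            * ∏ i ∈ Finset.univ.filter (fun i : Fin n => m ≤ (i : ℕ)),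
                (Fintype.card (Ω i) : ℝ) := by
  intro m
  induction m with
  | zero =>
    intro _
    have e1 : Finset.univ.filter (fun i : Fin n => (i : ℕ) < 0) = ∅ := by
      ext l; simp
    have e2 : Finset.univ.filter (fun i : Fin n => 0 ≤ (i : ℕ)) = Finset.univ := by
      ext l; simp
    rw [e1, e2]
    simp only [Finset.prod_empty, pow_zero, one_mul, Finset.sum_const, Finset.card_univ,
      nsmul_eq_mul, mul_one]
    rw [Fintype.card_pi]
    push_cast
    exact le_rfl
  | succ m ih =>
    intro hm
    have hm' : m < n := by omega
    set k : Fin n := ⟨m, hm'⟩ with hk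
    have hcard : (0 : ℝ) < Fintype.card (Ω k) := by
      have := Fintype.card_pos_iff.mpr (inferInstance : Nonempty (Ω k))
      exact_mod_cast this
    have hq1 : (0:ℝ) ≤ 1 + δ * q := by positivity
    -- update invariance for earlier factors
    have hupd : ∀ (u : ∀ i, Ω i) (b : Ω k) (i' : Fin n), (i' : ℕ) < m →
        F D i' (Function.update u k b) = F D i' u := by
      intro u b i' hi'
      have h1 : i' ≠ k := Fin.ne_of_val_ne (by simp [hk]; omega)
      have h2 : prev i' ≠ k := by
        have hv : (prev i' : ℕ) = (i' : ℕ) - 1 := rfl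
        refine Fin.ne_of_val_ne ?_
        simp [hv, hk]
        omega
      unfold F
      split
      · rw [Function.update_of_ne h1]
      · rw [Function.update_of_ne h1, Function.update_of_ne h2]
    have hrow : ∀ u : ∀ i, Ω i, ∑ b, (F D k (Function.update u k b) + δ) ≤ 1 + δ * q := by
      intro u
      rw [Finset.sum_add_distrib, Finset.sum_const, Finset.card_univ, nsmul_eq_mul]
      have hsF : ∑ b, F D k (Function.update u k b) ≤ 1 := by
        unfold F
        split
        · simp only [Function.update_self]
          rw [sum_marg D hD1]
        · have hpk : prev k ≠ k := by
            rename_i hne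
            have hv : (prev k : ℕ) = (k : ℕ) - 1 := rfl
            intro h
            rw [h] at hv
            omega
          calc ∑ b, condp D (prev k) k (Function.update u k b (prev k)) (Function.update u k b k)
              = ∑ b, condp D (prev k) k (u (prev k)) b := by
                refine Finset.sum_congr rfl fun b _ => ?_
                rw [Function.update_of_ne hpk, Function.update_self]
            _ ≤ 1 := sum_condp_le_one D (prev k) k (u (prev k))
      have hcq : (Fintype.card (Ω k) : ℝ) * δ ≤ δ * q := by
        rw [mul_comm]
        have hcq' : (Fintype.card (Ω k) : ℝ) ≤ q := by exact_mod_cast hq k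
        exact mul_le_mul_of_nonneg_left hcq' (le_of_lt hδ)
      linarith
    have hknotinP : k ∉ Finset.univ.filter (fun i : Fin n => (i : ℕ) < m) := by simp [hk]
    have hknotinC : k ∉ Finset.univ.filter (fun i : Fin n => m + 1 ≤ (i : ℕ)) := by simp [hk]
    have hsplitP : Finset.univ.filter (fun i : Fin n => (i : ℕ) < m + 1)
        = insert k (Finset.univ.filter (fun i : Fin n => (i : ℕ) < m)) := by
      ext l
      simp only [Finset.mem_filter, Finset.mem_univ, true_and, Finset.mem_insert, Fin.ext_iff, hk,
        Fin.val_mk]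
      omega
    have hsplitC : Finset.univ.filter (fun i : Fin n => m ≤ (i : ℕ))
        = insert k (Finset.univ.filter (fun i : Fin n => m + 1 ≤ (i : ℕ))) := by
      ext l
      simp only [Finset.mem_filter, Finset.mem_univ, true_and, Finset.mem_insert, Fin.ext_iff, hk,
        Fin.val_mk]
      omega
    have hprodnn : ∀ u : ∀ i, Ω i,
        0 ≤ ∏ i ∈ Finset.univ.filter (fun i : Fin n => (i : ℕ) < m), (F D i u + δ) :=
      fun u => Finset.prod_nonneg fun i' _ => add_nonneg (F_nonneg D hD0 i' u) hδ.le
    have key : ∀ (u : ∀ i, Ω i) (b : Ω k),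
        ∏ i ∈ Finset.univ.filter (fun i : Fin n => (i : ℕ) < m + 1),
            (F D i (Function.update u k b) + δ)
          = (F D k (Function.update u k b) + δ)
              * ∏ i ∈ Finset.univ.filter (fun i : Fin n => (i : ℕ) < m), (F D i u + δ) := by
      intro u b
      rw [hsplitP, Finset.prod_insert hknotinP]
      congr 1
      refine Finset.prod_congr rfl fun i' hi' => ?_
      rw [hupd u b i' (by simpa using hi')]
    have main : (Fintype.card (Ω k) : ℝ)
          * ∑ u, ∏ i ∈ Finset.univ.filter (fun i : Fin n => (i : ℕ) < m + 1), (F D i u + δ)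
        ≤ (Fintype.card (Ω k) : ℝ)
            * ((1 + δ * q) ^ (m + 1)
              * ∏ i ∈ Finset.univ.filter (fun i : Fin n => m + 1 ≤ (i : ℕ)),
                  (Fintype.card (Ω i) : ℝ)) := by
      rw [← sum_update k
        (fun u => ∏ i ∈ Finset.univ.filter (fun i : Fin n => (i : ℕ) < m + 1), (F D i u + δ))]
      have step1 : ∑ u : ∀ i, Ω i, ∑ b : Ω k,
            ∏ i ∈ Finset.univ.filter (fun i : Fin n => (i : ℕ) < m + 1),
              (F D i (Function.update u k b) + δ)
          ≤ ∑ u : ∀ i, Ω i, (1 + δ * q)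
              * ∏ i ∈ Finset.univ.filter (fun i : Fin n => (i : ℕ) < m), (F D i u + δ) := by
        refine Finset.sum_le_sum fun u _ => ?_
        calc ∑ b : Ω k, ∏ i ∈ Finset.univ.filter (fun i : Fin n => (i : ℕ) < m + 1),
                (F D i (Function.update u k b) + δ)
            = (∑ b : Ω k, (F D k (Function.update u k b) + δ))
                * ∏ i ∈ Finset.univ.filter (fun i : Fin n => (i : ℕ) < m), (F D i u + δ) := by
              rw [Finset.sum_mul]
              exact Finset.sum_congr rfl fun b _ => key u b
          _ ≤ (1 + δ * q)
                * ∏ i ∈ Finset.univ.filter (fun i : Fin n => (i : ℕ) < m), (F D i u + δ) :=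
              mul_le_mul_of_nonneg_right (hrow u) (hprodnn u)
      refine le_trans step1 ?_
      rw [← Finset.mul_sum]
      have step2 := mul_le_mul_of_nonneg_left (ih (le_of_lt hm')) hq1
      refine le_trans step2 (le_of_eq ?_)
      rw [hsplitC, Finset.prod_insert hknotinC]
      ring
    exact le_of_mul_le_mul_left main hcard

/-! ### The chain MRF construction -/

def edgeOf (k : Fin n) : Finset (Fin n) := {prev k, k}

theorem prev_val (k : Fin n) : (prev k : ℕ) = (k : ℕ) - 1 := rfl

theorem edgeOf_inj {k l : Fin n} (hk : (k : ℕ) ≠ 0) (hl : (l : ℕ) ≠ 0)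
    (h : edgeOf k = edgeOf l) : k = l := by
  have h1 : k ∈ edgeOf l := by rw [← h]; simp [edgeOf]
  have h2 : l ∈ edgeOf k := by rw [h]; simp [edgeOf]
  simp only [edgeOf, Finset.mem_insert, Finset.mem_singleton] at h1 h2
  rcases h1 with h1 | h1
  · rcases h2 with h2 | h2
    · apply Fin.ext
      have e1 := congrArg Fin.val h1
      have e2 := congrArg Fin.val h2
      rw [prev_val] at e1 e2
      omega
    · exact h2.symm
  · exact h1

theorem mem_edgeOf_self (k : Fin n) : k ∈ edgeOf k := by simp [edgeOf]

theorem mem_edgeOf_prev (k : Fin n) : prev k ∈ edgeOf k := by simp [edgeOf]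

noncomputable def chainMRF (δ : ℝ) : MRF n Ω where
  edges := (Finset.univ.filter (fun k : Fin n => (k : ℕ) ≠ 0)).image edgeOf
  vertexPot i a := if (i : ℕ) = 0 then Real.log (max (marg D i a) δ) else 0
  edgePot e u := ∑ k ∈ Finset.univ.filter (fun k : Fin n => (k : ℕ) ≠ 0 ∧ e = edgeOf k),
      Real.log (G D δ k u)
  edgePot_local := by
    intro e _ u v huv
    refine Finset.sum_congr rfl fun k hk => ?_
    simp only [Finset.mem_filter, Finset.mem_univ, true_and] at hk
    obtain ⟨hk0, hke⟩ := hk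
    have h1 : u (prev k) = v (prev k) := huv _ (by rw [hke]; exact mem_edgeOf_prev k)
    have h2 : u k = v k := huv _ (by rw [hke]; exact mem_edgeOf_self k)
    simp [G, F, hk0, h1, h2]

theorem edgePot_eval (δ : ℝ) (u : ∀ i, Ω i) {k : Fin n} (hk : (k : ℕ) ≠ 0) :
    (chainMRF D δ).edgePot (edgeOf k) u = Real.log (G D δ k u) := by
  have hset : Finset.univ.filter (fun l : Fin n => (l : ℕ) ≠ 0 ∧ edgeOf k = edgeOf l)
      = {k} := by
    ext l
    simp only [Finset.mem_filter, Finset.mem_univ, true_and, Finset.mem_singleton]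
    constructor
    · rintro ⟨hl0, hle⟩; exact (edgeOf_inj hl0 hk hle.symm)
    · rintro rfl; exact ⟨hk, rfl⟩
  show (∑ l ∈ Finset.univ.filter (fun l : Fin n => (l : ℕ) ≠ 0 ∧ edgeOf k = edgeOf l),
      Real.log (G D δ l u)) = _
  rw [hset, Finset.sum_singleton]

theorem sum_edgePot (δ : ℝ) (u : ∀ i, Ω i) :
    ∑ e ∈ (chainMRF D δ).edges, (chainMRF D δ).edgePot e u
      = ∑ k ∈ Finset.univ.filter (fun k : Fin n => (k : ℕ) ≠ 0), Real.log (G D δ k u) := by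
  have hinj : ∀ x ∈ Finset.univ.filter (fun k : Fin n => (k : ℕ) ≠ 0),
      ∀ y ∈ Finset.univ.filter (fun k : Fin n => (k : ℕ) ≠ 0), edgeOf x = edgeOf y → x = y := by
    intro x hx y hy h
    simp only [Finset.mem_filter, Finset.mem_univ, true_and] at hx hy
    exact edgeOf_inj hx hy h
  show ∑ e ∈ (Finset.univ.filter (fun k : Fin n => (k : ℕ) ≠ 0)).image edgeOf,
      (chainMRF D δ).edgePot e u = _
  rw [Finset.sum_image hinj]
  refine Finset.sum_congr rfl fun k hk => ?_
  simp only [Finset.mem_filter, Finset.mem_univ, true_and] at hk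
  exact edgePot_eval D δ u hk

theorem sum_vertexPot (δ : ℝ) (u : ∀ i, Ω i) :
    ∑ i, (chainMRF D δ).vertexPot i (u i)
      = ∑ i ∈ Finset.univ.filter (fun i : Fin n => (i : ℕ) = 0), Real.log (G D δ i u) := by
  rw [Finset.sum_filter]
  refine Finset.sum_congr rfl fun i _ => ?_
  show (if (i : ℕ) = 0 then Real.log (max (marg D i (u i)) δ) else 0) = _
  by_cases h : (i : ℕ) = 0 <;> simp [h, G, F]

theorem G_pos (hD0 : ∀ u, 0 ≤ D u) {δ : ℝ} (hδ : 0 < δ) (i : Fin n) (u : ∀ i, Ω i) :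
    0 < G D δ i u := lt_max_of_lt_right hδ

theorem G_le_one (hD0 : ∀ u, 0 ≤ D u) (hD1 : ∑ u, D u = 1) {δ : ℝ} (hδ1 : δ ≤ 1)
    (i : Fin n) (u : ∀ i, Ω i) : G D δ i u ≤ 1 :=
  max_le (F_le_one D hD0 hD1 i u) hδ1

theorem chainMRF_weight (δ : ℝ) (hδ : 0 < δ) (hD0 : ∀ u, 0 ≤ D u) (u : ∀ i, Ω i) :
    (chainMRF D δ).weight u = ∏ i, G D δ i u := by
  unfold MRF.weight
  rw [sum_vertexPot, sum_edgePot,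
    Finset.sum_filter_add_sum_filter_not Finset.univ (fun i : Fin n => (i : ℕ) = 0)
      (fun i => Real.log (G D δ i u)), Real.exp_sum]
  exact Finset.prod_congr rfl fun i _ => Real.exp_log (G_pos D hD0 hδ i u)

theorem chainMRF_degree (hD0 : ∀ u, 0 ≤ D u) (hD1 : ∑ u, D u = 1)
    {δ : ℝ} (hδ0 : 0 < δ) (hδ1 : δ ≤ 1) :
    (chainMRF D δ).DegreeLE (2 * Real.log δ⁻¹) := by
  intro i u
  have hlogpos : 0 ≤ Real.log δ⁻¹ := by
    rw [Real.log_inv]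
    have := Real.log_nonpos hδ0.le hδ1
    linarith
  have habs : ∀ k : Fin n, |Real.log (G D δ k u)| ≤ Real.log δ⁻¹ := by
    intro k
    rw [abs_le]
    constructor
    · rw [Real.log_inv, neg_neg]
      exact Real.log_le_log hδ0 (le_max_right _ _)
    · have := Real.log_nonpos (G_pos D hD0 hδ0 k u).le (G_le_one D hD0 hD1 hδ1 k u)
      linarith
  have hfe : (chainMRF D δ).edges.filter (fun e => i ∈ e)
      = ((Finset.univ.filter (fun k : Fin n => (k : ℕ) ≠ 0)).filter
          (fun k => i ∈ edgeOf k)).image edgeOf := by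
    show ((Finset.univ.filter (fun k : Fin n => (k : ℕ) ≠ 0)).image edgeOf).filter
        (fun e => i ∈ e) = _
    rw [Finset.filter_image]
  set s := (Finset.univ.filter (fun k : Fin n => (k : ℕ) ≠ 0)).filter (fun k => i ∈ edgeOf k)
    with hs
  have hsk : ∀ k ∈ s, (k : ℕ) ≠ 0 := by
    intro k hk
    simp only [hs, Finset.mem_filter, Finset.mem_univ, true_and] at hk
    exact hk.1
  have hinj : ∀ x ∈ s, ∀ y ∈ s, edgeOf x = edgeOf y → x = y := fun x hx y hy h =>
    edgeOf_inj (hsk x hx) (hsk y hy) h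
  have hsum : ∑ e ∈ (chainMRF D δ).edges.filter (fun e => i ∈ e), (chainMRF D δ).edgePot e u
      = ∑ k ∈ s, Real.log (G D δ k u) := by
    rw [hfe, Finset.sum_image hinj]
    exact Finset.sum_congr rfl fun k hk => edgePot_eval D δ u (hsk k hk)
  have hcard : s.card ≤ 2 := by
    have hsub : ∀ k ∈ s, (k : ℕ) ∈ ({(i : ℕ), (i : ℕ) + 1} : Finset ℕ) := by
      intro k hk
      simp only [hs, Finset.mem_filter, Finset.mem_univ, true_and] at hk
      obtain ⟨hk0, hki⟩ := hk
      simp only [edgeOf, Finset.mem_insert, Finset.mem_singleton] at hki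
      simp only [Finset.mem_insert, Finset.mem_singleton]
      rcases hki with h | h
      · right
        have hv := congrArg Fin.val h
        rw [prev_val] at hv
        omega
      · left
        have hv := congrArg Fin.val h
        omega
    have := Finset.card_le_card_of_injOn Fin.val hsub
      (fun x _ y _ h => Fin.val_injective h)
    refine le_trans this (le_trans (Finset.card_insert_le _ _) (by simp))
  rw [hsum]
  calc |∑ k ∈ s, Real.log (G D δ k u)| ≤ ∑ k ∈ s, |Real.log (G D δ k u)| :=
        Finset.abs_sum_le_sum_abs _ _
    _ ≤ ∑ _k ∈ s, Real.log δ⁻¹ := Finset.sum_le_sum fun k _ => habs k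
    _ = s.card * Real.log δ⁻¹ := by rw [Finset.sum_const, nsmul_eq_mul]
    _ ≤ 2 * Real.log δ⁻¹ := by
        have : (s.card : ℝ) ≤ 2 := by exact_mod_cast hcard
        exact mul_le_mul_of_nonneg_right this hlogpos

end MarkovMRF

/-- Any time-dependent Markov chain `X ∼ D` on a finite product
space can be approximated by a `Δ`-MRF distribution `D'` with
`Δ = 2·log(n · maxᵢ|Ωᵢ| / ε)` so that `D'(ω) ≥ (1-ε)·D(ω)` for all `ω`.
The Markov property is stated as: for all `ω` and consecutive indices `j, i`
(with `(j:ℕ)+1 = (i:ℕ)`, so `i` is at least the second index), if the prefix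
event `{∀ k < i, X k = ω k}` has positive probability, then
`Pr[Xᵢ = ωᵢ ∣ ∀ k < i, X_k = ω_k] = Pr[Xᵢ = ωᵢ ∣ X_j = ω_j]`. -/
theorem markov_chain_to_mrf
    {n : ℕ} (hn : 1 ≤ n) {Ω : Fin n → Type}
    [∀ i, Fintype (Ω i)] [∀ i, Nonempty (Ω i)] [∀ i, DecidableEq (Ω i)]
    (D : (∀ i, Ω i) → ℝ) (hD0 : ∀ u, 0 ≤ D u) (hD1 : ∑ u, D u = 1)
    (hmarkov : ∀ (ω : ∀ i, Ω i) (i j : Fin n), (j : ℕ) + 1 = (i : ℕ) →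
      0 < (∑ u, if ∀ k, k < i → u k = ω k then D u else 0) →
      (∑ u, if u i = ω i ∧ ∀ k, k < i → u k = ω k then D u else 0) /
          (∑ u, if ∀ k, k < i → u k = ω k then D u else 0)
        = (∑ u, if u i = ω i ∧ u j = ω j then D u else 0) /
          (∑ u, if u j = ω j then D u else 0))
    (ε : ℝ) (hε0 : 0 < ε) (hε1 : ε < 1) :
    ∃ D' : (∀ i, Ω i) → ℝ,
      IsMRFDist
        (2 * Real.log
          ((n * ((Finset.univ.sup fun i => Fintype.card (Ω i)) : ℕ) : ℝ) / ε)) D' ∧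
      ∀ ω, (1 - ε) * D ω ≤ D' ω := by
  classical
  set q : ℕ := Finset.univ.sup fun i => Fintype.card (Ω i) with hq
  have hqi : ∀ i : Fin n, Fintype.card (Ω i) ≤ q := by
    intro i
    rw [hq]
    exact Finset.le_sup (f := fun i => Fintype.card (Ω i)) (Finset.mem_univ i)
  have hq1 : 1 ≤ q := le_trans Fintype.card_pos (hqi ⟨0, hn⟩)
  have hn1 : (1 : ℝ) ≤ (n : ℝ) := by exact_mod_cast hn
  have hq1' : (1 : ℝ) ≤ (q : ℝ) := by exact_mod_cast hq1
  have hnq : (0 : ℝ) < (n : ℝ) * q := by nlinarith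
  have hnq1 : (1 : ℝ) ≤ (n : ℝ) * q := by nlinarith
  set δ : ℝ := ε / ((n : ℝ) * q) with hδ
  have hδ0 : 0 < δ := div_pos hε0 hnq
  have hδ1 : δ ≤ 1 := by
    rw [hδ, div_le_one hnq]
    linarith
  have hδinv : δ⁻¹ = ((n : ℝ) * q) / ε := by rw [hδ, inv_div]
  refine ⟨(MarkovMRF.chainMRF D δ).dist, ⟨MarkovMRF.chainMRF D δ, ?_, rfl⟩, ?_⟩
  · have hdeg := MarkovMRF.chainMRF_degree D hD0 hD1 hδ0 hδ1
    rwa [hδinv] at hdeg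
  · intro ω
    have hweight : ∀ u, (MarkovMRF.chainMRF D δ).weight u = ∏ i, MarkovMRF.G D δ i u :=
      MarkovMRF.chainMRF_weight D δ hδ0 hD0
    have hDle : D ω ≤ ∏ i, MarkovMRF.G D δ i ω :=
      le_trans (MarkovMRF.D_le_prod D hn hD0 hmarkov ω)
        (Finset.prod_le_prod (fun i _ => MarkovMRF.F_nonneg D hD0 i ω)
          (fun i _ => le_max_left _ _))
    set Z : ℝ := ∑ v, (MarkovMRF.chainMRF D δ).weight v with hZ
    have hZeq : Z = ∑ v, ∏ i, MarkovMRF.G D δ i v := Finset.sum_congr rfl fun v _ => hweight v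
    have hZpos : 0 < Z := by
      rw [hZeq]
      exact Finset.sum_pos
        (fun v _ => Finset.prod_pos fun i _ => MarkovMRF.G_pos D hD0 hδ0 i v)
        Finset.univ_nonempty
    have hZle : Z ≤ (1 + δ * q) ^ n := by
      have hf : Finset.univ.filter (fun i : Fin n => (i : ℕ) < n) = Finset.univ := by
        ext l; simp [l.isLt]
      have hf2 : Finset.univ.filter (fun i : Fin n => n ≤ (i : ℕ)) = ∅ := by
        ext l
        simp only [Finset.mem_filter, Finset.mem_univ, true_and, Finset.notMem_empty,
          iff_false, not_le]
        exact l.isLt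
      have h2 := MarkovMRF.Zbound D hD0 hD1 δ hδ0 q hqi n le_rfl
      rw [hf2, Finset.prod_empty, mul_one] at h2
      refine le_trans ?_ h2
      rw [hZeq]
      refine Finset.sum_le_sum fun v _ => ?_
      rw [hf]
      refine Finset.prod_le_prod (fun i _ => (MarkovMRF.G_pos D hD0 hδ0 i v).le)
        (fun i _ => max_le (le_add_of_nonneg_right hδ0.le)
          (le_add_of_nonneg_left (MarkovMRF.F_nonneg D hD0 i v)))
    have hexp : (1 + δ * q) ^ n ≤ Real.exp ε := by
      have h3 : (1 + δ * q) ≤ Real.exp (δ * q) := by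
        have := Real.add_one_le_exp (δ * q); linarith
      have h4 : (1 + δ * q) ^ n ≤ Real.exp (δ * q) ^ n := by
        refine pow_le_pow_left₀ ?_ h3 n
        positivity
      rw [← Real.exp_nat_mul] at h4
      have h5 : (n : ℝ) * (δ * q) = ε := by
        rw [hδ]
        field_simp
      rwa [h5] at h4
    have hfin : (1 - ε) * Z ≤ 1 := by
      have h6 : Real.exp (-ε) * Real.exp ε = 1 := by rw [← Real.exp_add]; simp
      have h7 : 1 - ε ≤ Real.exp (-ε) := by have := Real.add_one_le_exp (-ε); linarith
      nlinarith [Real.exp_pos ε, Real.exp_pos (-ε), hZpos, hZle, hexp]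
    have hdist : (MarkovMRF.chainMRF D δ).dist ω = (∏ i, MarkovMRF.G D δ i ω) / Z := by
      unfold MRF.dist
      rw [hweight ω]
    rw [hdist, le_div_iff₀ hZpos]
    nlinarith [mul_le_mul_of_nonneg_left hfin (hD0 ω), hDle, hZpos, hD0 ω]
end

section
/- Let Ω be a finite set, let D and D' be probability distributions on Ω, and let ALG, OPT : Ω → ℝ be functions with 0 ≤ OPT(ω) ≤ ALG(ω) and OPT(ω) ≤ C for all ω ∈ Ω, where C > 0. Let α ≥ 1 and assume E_{ω∼D}[ALG(ω)] ≥ α·E_{ω∼D}[OPT(ω)] and E_{ω∼D}[OPT(ω)] > 0. Set ε := E_{ω∼D}[OPT(ω)]/(2C) and assume D'(ω) ≥ (1 - ε)·D(ω) for all ω ∈ Ω. Then E_{ω∼D'}[ALG(ω)] ≥ (α/2)·E_{ω∼D'}[OPT(ω)]. -/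
/-- Distribution-transfer inequality: if `ALG` is `α`-hard
against `OPT` in expectation over `D`, `0 ≤ OPT ≤ ALG` and `OPT ≤ C`
pointwise, `E_D[OPT] > 0`, and `D'(ω) ≥ (1-ε)·D(ω)` for all `ω` with
`ε := E_D[OPT]/(2C)`, then `E_{D'}[ALG] ≥ (α/2)·E_{D'}[OPT]`. -/
theorem distribution_transfer
    {Ω : Type} [Fintype Ω]
    (D D' : Ω → ℝ)
    (hD0 : ∀ ω, 0 ≤ D ω) (hD1 : ∑ ω, D ω = 1)
    (hD'0 : ∀ ω, 0 ≤ D' ω) (hD'1 : ∑ ω, D' ω = 1)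
    (ALG OPT : Ω → ℝ) (C : ℝ) (hC : 0 < C)
    (hOPT0 : ∀ ω, 0 ≤ OPT ω)
    (hOPTALG : ∀ ω, OPT ω ≤ ALG ω)
    (hOPTC : ∀ ω, OPT ω ≤ C)
    (α : ℝ) (hα : 1 ≤ α)
    (hhard : (∑ ω, D ω * ALG ω) ≥ α * ∑ ω, D ω * OPT ω)
    (hpos : 0 < ∑ ω, D ω * OPT ω)
    (hclose : ∀ ω, D' ω ≥ (1 - (∑ ω', D ω' * OPT ω') / (2 * C)) * D ω) :
    (∑ ω, D' ω * ALG ω) ≥ (α / 2) * ∑ ω, D' ω * OPT ω := by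
  set μ := ∑ ω, D ω * OPT ω with hμ
  set ε := μ / (2*C) with hε
  have hμC : μ ≤ C := by
    calc μ ≤ ∑ ω, D ω * C :=
            Finset.sum_le_sum fun ω _ => mul_le_mul_of_nonneg_left (hOPTC ω) (hD0 ω)
    _ = C := by rw [← Finset.sum_mul, hD1, one_mul]
  have hε2 : ε ≤ 1/2 := by
    rw [hε, div_le_iff₀ (by linarith)]; linarith
  have hεpos : 0 < ε := div_pos hpos (by linarith)
  have hALG0 : ∀ ω, 0 ≤ ALG ω := fun ω => le_trans (hOPT0 ω) (hOPTALG ω)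
  have h1 : (1-ε) * ∑ ω, D ω * ALG ω ≤ ∑ ω, D' ω * ALG ω := by
    rw [Finset.mul_sum]
    refine Finset.sum_le_sum fun ω _ => ?_
    rw [← mul_assoc]
    exact mul_le_mul_of_nonneg_right (hclose ω) (hALG0 ω)
  have h2 : ∑ ω, D' ω * OPT ω ≤ (1-ε)*μ + ε*C := by
    have hsplit : ∑ ω, D' ω * OPT ω
        = (∑ ω, (1-ε) * (D ω * OPT ω)) + ∑ ω, (D' ω - (1-ε)*D ω) * OPT ω := by
      rw [← Finset.sum_add_distrib]
      exact Finset.sum_congr rfl fun ω _ => by ring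
    have hb : ∑ ω, (D' ω - (1-ε)*D ω) * OPT ω ≤ ∑ ω, (D' ω - (1-ε)*D ω) * C :=
      Finset.sum_le_sum fun ω _ =>
        mul_le_mul_of_nonneg_left (hOPTC ω) (by have := hclose ω; linarith)
    have hc : ∑ ω, (D' ω - (1-ε)*D ω) * C = ε * C := by
      rw [← Finset.sum_mul]
      have hs : ∑ ω, (D' ω - (1-ε)*D ω) = ε := by
        rw [Finset.sum_sub_distrib, ← Finset.mul_sum, hD1, hD'1]; ring
      rw [hs]
    rw [hsplit, ← Finset.mul_sum, ← hμ]
    linarith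
  have hεC : ε * C = μ / 2 := by rw [hε]; field_simp
  have h12 : (0:ℝ) ≤ 1 - ε := by linarith
  have hD'ALG : (1-ε) * (α * μ) ≤ ∑ ω, D' ω * ALG ω := by
    calc (1-ε)*(α*μ) ≤ (1-ε)*∑ ω, D ω * ALG ω := by nlinarith
    _ ≤ _ := h1
  have hαpos : (0:ℝ) < α/2 := by linarith
  have hup : (α/2) * ∑ ω, D' ω * OPT ω ≤ (α/2) * ((1-ε)*μ + μ/2) := by
    apply mul_le_mul_of_nonneg_left _ (le_of_lt hαpos)
    rw [← hεC] at *
    linarith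
  have hfin : (α/2) * ((1-ε)*μ + μ/2) ≤ (1-ε)*(α*μ) := by
    nlinarith [mul_nonneg (mul_nonneg (by linarith : (0:ℝ) ≤ α) hpos.le) (by linarith : (0:ℝ) ≤ 1/2 - ε)]
  linarith
end

section
/- Let Δ ≥ 0 and let M = (Ω, E, {ψ_i}_{i∈[n]}, {ψ_e}_{e∈E}) be an MRF on Ω = Ω_1 × ⋯ × Ω_n with Δ(M) ≤ Δ, inducing the distribution π = D_M. Fix two points v^1, v^{-1} ∈ Ω, and for σ ∈ {-1,1}^n write v^σ := (v_1^{σ_1}, …, v_n^{σ_n}). Define the probability distribution ρ on {-1,1}^n by ρ(σ) ∝ π(v^σ)·π(v^{-σ}). Then: (a) ρ is symmetric, i.e. ρ(σ) = ρ(-σ) for all σ ∈ {-1,1}^n; and (b) ρ is a 2Δ-MRF distribution — specifically, the MRF on {-1,1}^n with the same hyperedge set E, all vertex potentials identically zero, and edge potentials ψ̂_e(σ_e) := ψ_e((v_i^{σ_i})_{i∈e}) + ψ_e((v_i^{-σ_i})_{i∈e}) has maximum weighted degree at most 2Δ and induces the distribution ρ. -/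
/-- Given a `Δ`-MRF `M` with induced distribution `π = M.dist`
and two fixed points `v¹, v⁻¹ ∈ Ω`, the distribution `ρ` on sign vectors
(encoded as `Fin n → Bool`, `true ↦ +1`) defined by
`ρ(σ) ∝ π(v^σ)·π(v^{-σ})` is (a) symmetric, and (b) induced by an MRF on
`{-1,1}^n` with the same hyperedges, zero vertex potentials, edge potentials
`ψ̂_e(σ) = ψ_e(v^σ) + ψ_e(v^{-σ})`, and maximum weighted degree at most `2Δ`. -/
theorem googol_symmetrization_is_2Delta_mrf
    {n : ℕ} {Ω : Fin n → Type} [∀ i, Fintype (Ω i)] [∀ i, Nonempty (Ω i)]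
    (Δ : ℝ) (hΔ : 0 ≤ Δ) (M : MRF n Ω) (hdeg : M.DegreeLE Δ)
    (v1 vm1 : ∀ i, Ω i)
    (ρ : (Fin n → Bool) → ℝ)
    (hρ : ∀ σ : Fin n → Bool,
      ρ σ = (M.dist (fun i => if σ i then v1 i else vm1 i) *
             M.dist (fun i => if σ i then vm1 i else v1 i)) /
            (∑ τ : Fin n → Bool,
              M.dist (fun i => if τ i then v1 i else vm1 i) *
              M.dist (fun i => if τ i then vm1 i else v1 i))) :
    (∀ σ : Fin n → Bool, ρ σ = ρ (fun i => !(σ i))) ∧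
    ∃ Mhat : MRF n (fun _ => Bool),
      Mhat.edges = M.edges ∧
      (∀ (i : Fin n) (b : Bool), Mhat.vertexPot i b = 0) ∧
      (∀ e ∈ M.edges, ∀ σ : Fin n → Bool,
        Mhat.edgePot e σ
          = M.edgePot e (fun i => if σ i then v1 i else vm1 i)
            + M.edgePot e (fun i => if σ i then vm1 i else v1 i)) ∧
      Mhat.DegreeLE (2 * Δ) ∧
      Mhat.dist = ρ := by
  classical
  -- abbreviations
  have h1 : ∀ σ : Fin n → Bool,
      (fun i => if (!(σ i)) then v1 i else vm1 i)
        = (fun i => if σ i then vm1 i else v1 i) := by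
    intro σ; funext i; cases σ i <;> simp
  have h2 : ∀ σ : Fin n → Bool,
      (fun i => if (!(σ i)) then vm1 i else v1 i)
        = (fun i => if σ i then v1 i else vm1 i) := by
    intro σ; funext i; cases σ i <;> simp
  constructor
  · intro σ
    rw [hρ σ, hρ (fun i => !(σ i))]
    rw [h1 σ, h2 σ, mul_comm]
  · -- construct Mhat
    refine ⟨{ edges := M.edges
              vertexPot := fun _ _ => 0
              edgePot := fun e σ =>
                M.edgePot e (fun i => if σ i then v1 i else vm1 i)
                  + M.edgePot e (fun i => if σ i then vm1 i else v1 i)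
              edgePot_local := ?_ }, rfl, fun _ _ => rfl, fun _ _ _ => rfl, ?_, ?_⟩
    · intro e he u v huv
      have e1 : M.edgePot e (fun i => if u i then v1 i else vm1 i)
          = M.edgePot e (fun i => if v i then v1 i else vm1 i) := by
        apply M.edgePot_local e he
        intro i hi; rw [huv i hi]
      have e2 : M.edgePot e (fun i => if u i then vm1 i else v1 i)
          = M.edgePot e (fun i => if v i then vm1 i else v1 i) := by
        apply M.edgePot_local e he
        intro i hi; rw [huv i hi]
      simp [e1, e2]
    · -- degree bound
      intro i σ
      simp only []
      rw [Finset.sum_add_distrib]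
      calc |_ + _| ≤
          |∑ e ∈ M.edges.filter (fun e => i ∈ e),
              M.edgePot e (fun i => if σ i then v1 i else vm1 i)| +
          |∑ e ∈ M.edges.filter (fun e => i ∈ e),
              M.edgePot e (fun i => if σ i then vm1 i else v1 i)| := abs_add_le _ _
        _ ≤ Δ + Δ := add_le_add (hdeg i _) (hdeg i _)
        _ = 2 * Δ := by ring
    · -- dist = ρ
      funext σ
      set C : ℝ := ∑ i, (M.vertexPot i (v1 i) + M.vertexPot i (vm1 i)) with hC
      set Z : ℝ := ∑ v, M.weight v with hZ
      have hZpos : 0 < Z := Finset.sum_pos (fun _ _ => Real.exp_pos _) Finset.univ_nonempty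
      set f : (Fin n → Bool) → ℝ := fun τ =>
        M.weight (fun i => if τ i then v1 i else vm1 i) *
          M.weight (fun i => if τ i then vm1 i else v1 i) with hf
      have hfpos : ∀ τ, 0 < f τ := fun τ =>
        mul_pos (Real.exp_pos _) (Real.exp_pos _)
      have hfsum : 0 < ∑ τ, f τ :=
        Finset.sum_pos (fun τ _ => hfpos τ) Finset.univ_nonempty
      -- ρ σ = f σ / ∑ f
      have hρ' : ρ σ = f σ / ∑ τ, f τ := by
        rw [hρ σ]
        have hd : ∀ τ : Fin n → Bool,
            M.dist (fun i => if τ i then v1 i else vm1 i) *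
              M.dist (fun i => if τ i then vm1 i else v1 i) = f τ / (Z * Z) := by
          intro τ
          simp only [MRF.dist, ← hZ, hf]
          rw [div_mul_div_comm]
        rw [hd σ]
        have : (∑ τ : Fin n → Bool,
            M.dist (fun i => if τ i then v1 i else vm1 i) *
              M.dist (fun i => if τ i then vm1 i else v1 i)) = (∑ τ, f τ) / (Z * Z) := by
          rw [Finset.sum_div]
          exact Finset.sum_congr rfl (fun τ _ => hd τ)
        rw [this]
        have hZne : Z * Z ≠ 0 := by positivity
        have hfne : (∑ τ, f τ) ≠ 0 := hfsum.ne'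
        field_simp
      -- now relate f to Mhat.weight
      have hw : ∀ τ : Fin n → Bool, f τ = Real.exp C *
          Real.exp (∑ e ∈ M.edges,
            (M.edgePot e (fun i => if τ i then v1 i else vm1 i)
              + M.edgePot e (fun i => if τ i then vm1 i else v1 i))) := by
        intro τ
        have hvert : (∑ i, M.vertexPot i (if τ i then v1 i else vm1 i))
            + ∑ i, M.vertexPot i (if τ i then vm1 i else v1 i) = C := by
          rw [hC, ← Finset.sum_add_distrib]
          refine Finset.sum_congr rfl (fun i _ => ?_)
          cases τ i <;> simp [add_comm]
        simp only [hf, MRF.weight, ← Real.exp_add, Finset.sum_add_distrib]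
        congr 1
        linarith [hvert]
      show MRF.dist _ σ = ρ σ
      rw [hρ']
      simp only [MRF.dist, MRF.weight]
      have hwz : ∀ τ : Fin n → Bool,
          Real.exp ((∑ _i : Fin n, (0:ℝ)) + ∑ e ∈ M.edges,
            (M.edgePot e (fun i => if τ i then v1 i else vm1 i)
              + M.edgePot e (fun i => if τ i then vm1 i else v1 i)))
          = Real.exp (∑ e ∈ M.edges,
            (M.edgePot e (fun i => if τ i then v1 i else vm1 i)
              + M.edgePot e (fun i => if τ i then vm1 i else v1 i))) := by
        intro τ; simp
      rw [hwz σ]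
      have hsum : (∑ τ : Fin n → Bool, Real.exp ((∑ _i : Fin n, (0:ℝ)) +
          ∑ e ∈ M.edges,
            (M.edgePot e (fun i => if τ i then v1 i else vm1 i)
              + M.edgePot e (fun i => if τ i then vm1 i else v1 i))))
          = ∑ τ : Fin n → Bool, Real.exp (∑ e ∈ M.edges,
            (M.edgePot e (fun i => if τ i then v1 i else vm1 i)
              + M.edgePot e (fun i => if τ i then vm1 i else v1 i))) :=
        Finset.sum_congr rfl (fun τ _ => hwz τ)
      rw [hsum]
      have hfsum' : (∑ τ, f τ) = Real.exp C *
          ∑ τ : Fin n → Bool, Real.exp (∑ e ∈ M.edges,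
            (M.edgePot e (fun i => if τ i then v1 i else vm1 i)
              + M.edgePot e (fun i => if τ i then vm1 i else v1 i))) := by
        rw [Finset.mul_sum]
        exact Finset.sum_congr rfl (fun τ _ => hw τ)
      rw [hw σ, hfsum', mul_div_mul_left _ _ (Real.exp_ne_zero C)]
end

section
/- Let Δ ≥ 0 and let ρ be a Δ-MRF distribution on {-1,1}^n that is symmetric, i.e. ρ(σ) = ρ(-σ) for all σ ∈ {-1,1}^n, and let σ ∼ ρ. Then for every i ∈ [n]: Pr[σ_i = 1] = 1/2, and for every x ∈ {-1,1}^{[n]∖{i}} (conditioning is well defined since a Δ-MRF distribution has full support), Pr[σ_i = 1 | σ_{-i} = x] ≥ (1/2)·e^{-4Δ}, where σ_{-i} denotes the coordinates of σ other than i. -/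
section Aux
variable {n : ℕ} {Ω : Fin n → Type} [∀ i, Fintype (Ω i)]

/-- score of a configuration: log of the weight. -/
noncomputable def MRF.score (M : MRF n Ω) (u : ∀ i, Ω i) : ℝ :=
  ∑ i, M.vertexPot i (u i) + ∑ e ∈ M.edges, M.edgePot e u

lemma MRF.weight_eq (M : MRF n Ω) (u : ∀ i, Ω i) :
    M.weight u = Real.exp (M.score u) := rfl

lemma MRF.score_diff (M : MRF n Ω) (i : Fin n) (u v : ∀ i, Ω i)
    (huv : ∀ j, j ≠ i → u j = v j) :
    M.score u - M.score v
      = (M.vertexPot i (u i) - M.vertexPot i (v i))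
        + ((∑ e ∈ M.edges.filter (fun e => i ∈ e), M.edgePot e u)
           - ∑ e ∈ M.edges.filter (fun e => i ∈ e), M.edgePot e v) := by
  have hv : ∀ w : ∀ i, Ω i, (∑ j, M.vertexPot j (w j))
      = M.vertexPot i (w i) + ∑ j ∈ Finset.univ.erase i, M.vertexPot j (w j) := by
    intro w
    exact (Finset.add_sum_erase _ _ (Finset.mem_univ i)).symm
  have hv2 : (∑ j ∈ Finset.univ.erase i, M.vertexPot j (u j))
      = ∑ j ∈ Finset.univ.erase i, M.vertexPot j (v j) := by
    refine Finset.sum_congr rfl fun j hj => ?_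
    rw [huv j (Finset.ne_of_mem_erase hj)]
  have he : ∀ w : ∀ i, Ω i, (∑ e ∈ M.edges, M.edgePot e w)
      = (∑ e ∈ M.edges.filter (fun e => i ∈ e), M.edgePot e w)
        + ∑ e ∈ M.edges.filter (fun e => ¬ i ∈ e), M.edgePot e w := by
    intro w
    rw [Finset.sum_filter_add_sum_filter_not]
  have he2 : (∑ e ∈ M.edges.filter (fun e => ¬ i ∈ e), M.edgePot e u)
      = ∑ e ∈ M.edges.filter (fun e => ¬ i ∈ e), M.edgePot e v := by
    refine Finset.sum_congr rfl fun e he => ?_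
    rw [Finset.mem_filter] at he
    exact M.edgePot_local e he.1 u v fun j hj => huv j (by rintro rfl; exact he.2 hj)
  unfold MRF.score
  rw [hv u, hv v, hv2, he u, he v, he2]
  ring

end Aux

/-- If `ρ` is a symmetric `Δ`-MRF distribution on `{-1,1}^n`
(encoded as `Fin n → Bool`, `true ↦ +1`) and `σ ∼ ρ`, then for every `i`,
`Pr[σᵢ = 1] = 1/2`, and for every assignment `x` of the other coordinates,
`Pr[σᵢ = 1 ∣ σ_{-i} = x] ≥ (1/2)·e^{-4Δ}`. -/
theorem symmetric_mrf_marginal_bounds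
    {n : ℕ} (Δ : ℝ) (hΔ : 0 ≤ Δ)
    (ρ : (Fin n → Bool) → ℝ)
    (hmrf : IsMRFDist (n := n) (Ω := fun _ => Bool) Δ ρ)
    (hsym : ∀ σ : Fin n → Bool, ρ σ = ρ (fun i => !(σ i))) :
    ∀ i : Fin n,
      (∑ σ : Fin n → Bool, if σ i = true then ρ σ else 0) = 1 / 2 ∧
      ∀ x : Fin n → Bool,
        (∑ σ : Fin n → Bool,
            if σ i = true ∧ ∀ j, j ≠ i → σ j = x j then ρ σ else 0) /
          (∑ σ : Fin n → Bool, if ∀ j, j ≠ i → σ j = x j then ρ σ else 0)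
        ≥ (1 / 2) * Real.exp (-(4 * Δ)) := by
  obtain ⟨M, hdeg, hρ⟩ := hmrf
  subst hρ
  have hw : ∀ u : Fin n → Bool, 0 < M.weight u := fun u => Real.exp_pos _
  have hZ : 0 < ∑ v : Fin n → Bool, M.weight v :=
    Finset.sum_pos (fun v _ => hw v) Finset.univ_nonempty
  have hsum1 : ∑ σ : Fin n → Bool, M.dist σ = 1 := by
    unfold MRF.dist
    rw [← Finset.sum_div, div_self hZ.ne']
  have hflip : Function.Involutive (fun σ : Fin n → Bool => fun j => !(σ j)) := by
    intro σ; funext j; simp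
  have hws : ∀ σ : Fin n → Bool, M.score σ = M.score (fun j => !(σ j)) := by
    intro σ
    have h := hsym σ
    unfold MRF.dist at h
    rw [div_eq_div_iff hZ.ne' hZ.ne'] at h
    have h2 : M.weight σ = M.weight (fun j => !(σ j)) := mul_right_cancel₀ hZ.ne' h
    rwa [MRF.weight_eq, MRF.weight_eq, Real.exp_eq_exp] at h2
  intro i
  constructor
  · have h1 : (∑ σ : Fin n → Bool, if σ i = true then M.dist σ else 0)
        = ∑ σ : Fin n → Bool, if σ i = false then M.dist σ else 0 := by
      refine Fintype.sum_equiv (Function.Involutive.toPerm _ hflip)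
        (fun σ : Fin n → Bool => if σ i = true then M.dist σ else 0)
        (fun σ : Fin n → Bool => if σ i = false then M.dist σ else 0)
        (fun σ => ?_)
      have hd : M.dist σ = M.dist (fun j => !(σ j)) := hsym σ
      simp only [Function.Involutive.coe_toPerm]
      by_cases h : σ i = true <;> simp [h, hd]
    have h2 : (∑ σ : Fin n → Bool, if σ i = true then M.dist σ else 0)
        + (∑ σ : Fin n → Bool, if σ i = false then M.dist σ else 0) = 1 := by
      rw [← Finset.sum_add_distrib, ← hsum1]
      refine Finset.sum_congr rfl fun σ _ => ?_
      cases h : σ i <;> simp [h]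
    linarith
  · intro x
    set a := Function.update x i true with ha
    set b := Function.update x i false with hb
    have hai : a i = true := by rw [ha]; simp
    have hbi : b i = false := by rw [hb]; simp
    have hcond : ∀ σ : Fin n → Bool, (∀ j, j ≠ i → σ j = x j) ↔ (σ = a ∨ σ = b) := by
      intro σ
      constructor
      · intro h
        cases hσ : σ i
        · right; funext j; by_cases hj : j = i
          · subst hj; rw [hσ, hbi]
          · rw [hb, Function.update_of_ne hj, h j hj]
        · left; funext j; by_cases hj : j = i
          · subst hj; rw [hσ, hai]
          · rw [ha, Function.update_of_ne hj, h j hj]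
      · rintro (rfl | rfl) j hj
        · rw [ha, Function.update_of_ne hj]
        · rw [hb, Function.update_of_ne hj]
    have hcondn : ∀ σ : Fin n → Bool,
        (σ i = true ∧ ∀ j, j ≠ i → σ j = x j) ↔ σ = a := by
      intro σ
      constructor
      · rintro ⟨h1, h2⟩
        rcases (hcond σ).mp h2 with rfl | rfl
        · rfl
        · rw [hbi] at h1; exact absurd h1 (by simp)
      · rintro rfl
        exact ⟨hai, fun j hj => by rw [ha, Function.update_of_ne hj]⟩
    have hab : a ≠ b := by
      intro h
      have := congrFun h i
      rw [hai, hbi] at this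
      exact absurd this (by simp)
    have hnum : (∑ σ : Fin n → Bool,
        if σ i = true ∧ ∀ j, j ≠ i → σ j = x j then M.dist σ else 0) = M.dist a := by
      rw [Finset.sum_congr rfl fun σ _ => if_congr (hcondn σ) rfl rfl]
      simp
    have hden : (∑ σ : Fin n → Bool, if ∀ j, j ≠ i → σ j = x j then M.dist σ else 0)
        = M.dist a + M.dist b := by
      rw [Finset.sum_congr rfl fun σ _ => if_congr (hcond σ) rfl rfl]
      have hpt : ∀ σ : Fin n → Bool, (if σ = a ∨ σ = b then M.dist σ else 0)
          = (if σ = a then M.dist σ else 0) + (if σ = b then M.dist σ else 0) := by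
        intro σ
        by_cases h1 : σ = a <;> by_cases h2 : σ = b
        · exact absurd (h1.symm.trans h2) hab
        · simp [h1, h2, hab]
        · simp [h1, h2, Ne.symm hab]
        · simp [h1, h2]
      rw [Finset.sum_congr rfl fun σ _ => hpt σ, Finset.sum_add_distrib]
      simp
    rw [hnum, hden]
    -- symmetry: score of flipped configurations
    have hflipupd : ∀ c : Bool, (fun j => !(Function.update x i c j))
        = Function.update (fun j => !(x j)) i (!c) := by
      intro c; funext j; by_cases hj : j = i
      · subst hj; simp
      · simp [Function.update_of_ne hj]
    set a' := Function.update (fun j => !(x j)) i true with ha'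
    set b' := Function.update (fun j => !(x j)) i false with hb'
    have ha'i : a' i = true := by rw [ha']; simp
    have hb'i : b' i = false := by rw [hb']; simp
    have hsab : M.score a = M.score b' := by
      rw [hws a, ha, hflipupd true]; rfl
    have hsba : M.score b = M.score a' := by
      rw [hws b, hb, hflipupd false]; rfl
    have hd1 := M.score_diff i b a (fun j hj => by
      rw [hb, ha, Function.update_of_ne hj, Function.update_of_ne hj])
    have hd2 := M.score_diff i a' b' (fun j hj => by
      rw [ha', hb', Function.update_of_ne hj, Function.update_of_ne hj])
    rw [hai, hbi] at hd1
    rw [ha'i, hb'i] at hd2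
    have e1 := abs_le.mp (hdeg i a)
    have e2 := abs_le.mp (hdeg i b)
    have e3 := abs_le.mp (hdeg i a')
    have e4 := abs_le.mp (hdeg i b')
    have hkey : M.score b - M.score a ≤ 2 * Δ := by
      have heq : M.score b - M.score a = M.score a' - M.score b' := by
        rw [hsab, hsba]
      linarith [hd1, hd2, e1.1, e1.2, e2.1, e2.2, e3.1, e3.2, e4.1, e4.2]
    have hwba : M.weight b ≤ Real.exp (2 * Δ) * M.weight a := by
      rw [MRF.weight_eq, MRF.weight_eq, ← Real.exp_add]
      exact Real.exp_le_exp.mpr (by linarith)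
    have hdist_eq : M.dist a / (M.dist a + M.dist b)
        = M.weight a / (M.weight a + M.weight b) := by
      unfold MRF.dist
      rw [← add_div]
      have h1 : M.weight a + M.weight b ≠ 0 := ne_of_gt (by linarith [hw a, hw b])
      field_simp
    have hE2 : Real.exp (-(4 * Δ)) * Real.exp (2 * Δ) ≤ 1 := by
      rw [← Real.exp_add]
      have : Real.exp (-(4 * Δ) + 2 * Δ) ≤ Real.exp 0 :=
        Real.exp_le_exp.mpr (by linarith)
      simpa using this
    have hE3 : Real.exp (-(4 * Δ)) ≤ 1 := by
      have : Real.exp (-(4 * Δ)) ≤ Real.exp 0 := Real.exp_le_exp.mpr (by linarith)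
      simpa using this
    rw [hdist_eq, ge_iff_le, le_div_iff₀ (by linarith [hw a, hw b, hw a'])]
    nlinarith [hw a, hw b, hwba,
      mul_le_mul_of_nonneg_left hwba (Real.exp_pos (-(4 * Δ))).le,
      mul_le_mul_of_nonneg_right hE2 (hw a).le,
      mul_le_mul_of_nonneg_right hE3 (hw a).le]
end

section
/- Fix an integer n ≥ 1 and a real M > 1. Let B_2, …, B_n be i.i.d. Bernoulli(1/M) random variables and define X_1 := 1 and X_i := M·X_{i-1}·B_i for 2 ≤ i ≤ n. Then: (a) (X_i)_{1≤i≤n} is a martingale with respect to its natural filtration, and for every stopping time τ (with respect to this filtration) taking values in {1, …, n}, E[X_τ] = 1; (b) E[max_{1≤i≤n} X_i] = (n-1)·(1 - 1/M) + 1. Consequently, the ratio of the prophet's expected value E[max_i X_i] to the best achievable expected stopped value equals (n-1)(1 - 1/M) + 1. -/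
open Finset

namespace MCPG

variable {M : ℝ}

noncomputable def bern (M : ℝ) (b : Bool) : ℝ := if b then 1 / M else 1 - 1 / M

noncomputable def Pw (M : ℝ) {m : ℕ} (ω : Fin m → Bool) : ℝ := ∏ j, bern M (ω j)

noncomputable def Y (M : ℝ) (m : ℕ) (i : ℕ) (ω : Fin m → Bool) : ℝ :=
  if ∀ j : Fin m, (j : ℕ) < i → ω j = true then M ^ i else 0

lemma sum_prod_bool {m : ℕ} (g : Fin m → Bool → ℝ) :
    (∑ ω : Fin m → Bool, ∏ j, g j (ω j)) = ∏ j, (g j true + g j false) := by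
  calc (∑ ω : Fin m → Bool, ∏ j, g j (ω j)) = ∏ j, ∑ b : Bool, g j b :=
        (Fintype.prod_sum g).symm
    _ = ∏ j, (g j true + g j false) := by
        exact Finset.prod_congr rfl fun j _ => by simp

lemma filter_coe_lt_eq {m t : ℕ} (ht : t ≤ m) :
    (univ : Finset (Fin m)).filter (fun j : Fin m => (j : ℕ) < t)
      = (univ : Finset (Fin t)).map ⟨Fin.castLE ht, Fin.castLE_injective ht⟩ := by
  ext j
  simp only [mem_filter, mem_univ, true_and, mem_map, Function.Embedding.coeFn_mk]
  constructor
  · intro hj; exact ⟨⟨(j : ℕ), hj⟩, Fin.ext rfl⟩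
  · rintro ⟨a, rfl⟩; exact a.isLt

lemma prod_ite_lt {m t : ℕ} (ht : t ≤ m) (c : ℝ) :
    (∏ j : Fin m, if (j : ℕ) < t then c else 1) = c ^ t := by
  rw [Finset.prod_ite, Finset.prod_const, Finset.prod_const, one_pow, mul_one,
    filter_coe_lt_eq ht, Finset.card_map, Finset.card_univ, Fintype.card_fin]

noncomputable def gp (M : ℝ) (t : ℕ) {m : ℕ} (j : Fin m) (b : Bool) : ℝ :=
  if (j : ℕ) < t then (if b then 1 / M else 0) else bern M b

lemma sum_prefix {m : ℕ} (M : ℝ) {t : ℕ} (ht : t ≤ m) :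
    (∑ ω : Fin m → Bool,
        if (∀ j : Fin m, (j : ℕ) < t → ω j = true) then Pw M ω else 0)
      = (1 / M) ^ t := by
  have h : ∀ ω : Fin m → Bool,
      (if (∀ j : Fin m, (j : ℕ) < t → ω j = true) then Pw M ω else 0)
        = ∏ j, gp M t j (ω j) := by
    intro ω
    by_cases hω : ∀ j : Fin m, (j : ℕ) < t → ω j = true
    · rw [if_pos hω]
      refine Finset.prod_congr rfl fun j _ => ?_
      by_cases hj : (j : ℕ) < t
      · rw [gp, if_pos hj, hω j hj]; rfl
      · rw [gp, if_neg hj]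
    · rw [if_neg hω]
      push_neg at hω
      obtain ⟨j0, hj0, hj0f⟩ := hω
      refine (Finset.prod_eq_zero (mem_univ j0) ?_).symm
      have hf : ω j0 = false := by
        cases hb : ω j0
        · rfl
        · exact absurd hb hj0f
      rw [hf, gp, if_pos hj0]; rfl
  rw [Finset.sum_congr rfl fun ω _ => h ω, sum_prod_bool (gp M t)]
  have h2 : ∀ j : Fin m,
      gp M t j true + gp M t j false = (if (j : ℕ) < t then 1 / M else 1) := by
    intro j
    by_cases hj : (j : ℕ) < t
    · simp [gp, hj]
    · simp [gp, hj, bern]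
  rw [Finset.prod_congr rfl fun j _ => h2 j, prod_ite_lt ht]

lemma sum_Pw (m : ℕ) (M : ℝ) : (∑ ω : Fin m → Bool, Pw M ω) = 1 := by
  have h := sum_prefix (m := m) M (Nat.zero_le m)
  simpa using h

noncomputable def gm (M : ℝ) (i : ℕ) {m : ℕ} (j : Fin m) (b : Bool) : ℝ :=
  if (j : ℕ) < i then (if b then 1 / M else 0)
  else if (j : ℕ) = i then bern M b * (if b then M ^ (i+1) - M ^ i else -(M ^ i))
  else bern M b

lemma cylinder_increment {m : ℕ} (hM : 1 < M) {i : ℕ} (hi : i < m)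
    (y : Fin m → Bool) :
    (∑ ω : Fin m → Bool, if (∀ j : Fin m, (j : ℕ) < i → ω j = y j) then
        Pw M ω * (Y M m (i + 1) ω - Y M m i ω) else 0) = 0 := by
  have hM0 : M ≠ 0 := ne_of_gt (lt_trans one_pos hM)
  by_cases hy : ∀ j : Fin m, (j : ℕ) < i → y j = true
  · have hterm : ∀ ω : Fin m → Bool,
        (if (∀ j : Fin m, (j : ℕ) < i → ω j = y j) then
            Pw M ω * (Y M m (i + 1) ω - Y M m i ω) else 0) = ∏ j, gm M i j (ω j) := by
      intro ω
      by_cases hω : ∀ j : Fin m, (j : ℕ) < i → ω j = true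
      · have hcyl : ∀ j : Fin m, (j : ℕ) < i → ω j = y j :=
          fun j hj => (hω j hj).trans (hy j hj).symm
        rw [if_pos hcyl]
        have hYi : Y M m i ω = M ^ i := if_pos hω
        have hYsucc : Y M m (i + 1) ω = if ω ⟨i, hi⟩ then M ^ (i + 1) else 0 := by
          by_cases hb : ω ⟨i, hi⟩ = true
          · rw [Y, if_pos, if_pos hb]
            intro j hj
            rcases Nat.lt_succ_iff_lt_or_eq.mp hj with h | h
            · exact hω j h
            · have hje : j = ⟨i, hi⟩ := Fin.ext h
              rw [hje]; exact hb
          · rw [Y, if_neg, if_neg hb]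
            intro hall
            exact hb (hall ⟨i, hi⟩ (Nat.lt_succ_self i))
        have hsplit : ∀ j : Fin m, gm M i j (ω j)
            = bern M (ω j) * (if j = (⟨i, hi⟩ : Fin m) then
                (if ω j then M ^ (i+1) - M ^ i else -(M ^ i)) else 1) := by
          intro j
          by_cases hj : (j : ℕ) < i
          · have hne : j ≠ ⟨i, hi⟩ := by
              intro h; rw [h] at hj; exact absurd hj (lt_irrefl i)
            simp [gm, hj, hne, hω j hj, bern]
          · by_cases hji : (j : ℕ) = i
            · have hje : j = ⟨i, hi⟩ := Fin.ext hji
              simp [gm, hj, hji, hje]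
            · have hne : j ≠ ⟨i, hi⟩ := by
                intro h; rw [h] at hji; exact hji rfl
              simp [gm, hj, hji, hne]
        rw [Finset.prod_congr rfl fun j _ => hsplit j, Finset.prod_mul_distrib,
          Finset.prod_ite_eq' univ (⟨i, hi⟩ : Fin m)
            (fun j => if ω j then M ^ (i+1) - M ^ i else -(M ^ i)),
          if_pos (mem_univ _)]
        rw [hYi, hYsucc]
        show Pw M ω * _ = Pw M ω * _
        by_cases hb : ω ⟨i, hi⟩ = true
        · rw [if_pos hb, if_pos hb]
        · rw [if_neg hb, if_neg hb]; ring
      · push_neg at hω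
        obtain ⟨j0, hj0, hj0f⟩ := hω
        have hωf : ω j0 = false := by
          cases hb : ω j0
          · rfl
          · exact absurd hb hj0f
        have hl : (if (∀ j : Fin m, (j : ℕ) < i → ω j = y j) then
            Pw M ω * (Y M m (i + 1) ω - Y M m i ω) else 0) = 0 := by
          by_cases hc : ∀ j : Fin m, (j : ℕ) < i → ω j = y j
          · exfalso
            have hq := (hc j0 hj0).trans (hy j0 hj0)
            rw [hωf] at hq; exact Bool.noConfusion hq
          · rw [if_neg hc]
        rw [hl]
        refine (Finset.prod_eq_zero (mem_univ j0) ?_).symm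
        rw [hωf, gm, if_pos hj0]; rfl
    rw [Finset.sum_congr rfl fun ω _ => hterm ω, sum_prod_bool (gm M i)]
    apply Finset.prod_eq_zero (mem_univ (⟨i, hi⟩ : Fin m))
    have h1 : ¬ ((i : ℕ) < i) := lt_irrefl i
    have h2 : (((⟨i, hi⟩ : Fin m) : ℕ)) = i := rfl
    rw [gm, gm, h2, if_neg h1, if_neg h1, if_pos rfl, if_pos rfl]
    simp only [if_true, if_false, bern]
    simp only [Bool.false_eq_true, if_false, if_true]
    field_simp
    ring
  · push_neg at hy
    obtain ⟨j0, hj0, hj0f⟩ := hy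
    have hyf : y j0 = false := by
      cases hb : y j0
      · rfl
      · exact absurd hb hj0f
    refine Finset.sum_eq_zero fun ω _ => ?_
    by_cases hc : ∀ j : Fin m, (j : ℕ) < i → ω j = y j
    · rw [if_pos hc]
      have hωf : ω j0 = false := (hc j0 hj0).trans hyf
      have h1 : Y M m i ω = 0 := by
        rw [Y, if_neg]
        intro hall
        rw [hall j0 hj0] at hωf; exact Bool.noConfusion hωf
      have h2 : Y M m (i + 1) ω = 0 := by
        rw [Y, if_neg]
        intro hall
        rw [hall j0 (lt_trans hj0 (Nat.lt_succ_self i))] at hωf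
        exact Bool.noConfusion hωf
      rw [h1, h2]; ring
    · rw [if_neg hc]

def kk {m : ℕ} (ω : Fin m → Bool) : ℕ :=
  Nat.find (⟨m, Or.inl le_rfl⟩ :
    ∃ i, m ≤ i ∨ ∃ j : Fin m, (j : ℕ) = i ∧ ω j = false)

lemma kk_le {m : ℕ} (ω : Fin m → Bool) : kk ω ≤ m :=
  Nat.find_le (Or.inl le_rfl)

lemma kk_spec {m : ℕ} (ω : Fin m → Bool) :
    m ≤ kk ω ∨ ∃ j : Fin m, (j : ℕ) = kk ω ∧ ω j = false :=
  Nat.find_spec (⟨m, Or.inl le_rfl⟩ :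
    ∃ i, m ≤ i ∨ ∃ j : Fin m, (j : ℕ) = i ∧ ω j = false)

lemma kk_min {m : ℕ} (ω : Fin m → Bool) {i : ℕ} (h : i < kk ω) :
    ¬ (m ≤ i ∨ ∃ j : Fin m, (j : ℕ) = i ∧ ω j = false) :=
  Nat.find_min (⟨m, Or.inl le_rfl⟩ :
    ∃ i, m ≤ i ∨ ∃ j : Fin m, (j : ℕ) = i ∧ ω j = false) h

lemma kk_prefix {m : ℕ} (ω : Fin m → Bool) :
    ∀ j : Fin m, (j : ℕ) < kk ω → ω j = true := by
  intro j hj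
  have h := kk_min ω hj
  push_neg at h
  have h2 := h.2 j rfl
  cases hb : ω j
  · exact absurd hb h2
  · rfl

lemma le_kk {m : ℕ} (ω : Fin m → Bool) {i : ℕ} (hi : i ≤ m)
    (h : ∀ j : Fin m, (j : ℕ) < i → ω j = true) : i ≤ kk ω := by
  by_contra hlt
  push_neg at hlt
  rcases kk_spec ω with hm | ⟨j, hji, hjf⟩
  · exact absurd (lt_of_le_of_lt hm hlt) (not_lt.mpr hi)
  · have : ω j = true := h j (by omega)
    rw [this] at hjf; exact Bool.noConfusion hjf

lemma lt_kk_iff {m : ℕ} (ω : Fin m → Bool) {i : ℕ} (hi : i < m) :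
    i < kk ω ↔ ∀ j : Fin m, (j : ℕ) < i + 1 → ω j = true := by
  constructor
  · intro h j hj
    exact kk_prefix ω j (by omega)
  · intro h
    exact Nat.lt_of_succ_le (le_kk ω (by omega) h)

lemma sum_prophet {m : ℕ} (hM : 1 < M) :
    (∑ ω : Fin m → Bool, Pw M ω * M ^ kk ω) = m * (1 - 1 / M) + 1 := by
  have hM0 : M ≠ 0 := ne_of_gt (lt_trans one_pos hM)
  have hpow : ∀ ω : Fin m → Bool, M ^ kk ω
      = 1 + ∑ i ∈ Finset.range m, (if i < kk ω then M ^ (i+1) - M ^ i else 0) := by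
    intro ω
    have h1 : (∑ i ∈ Finset.range m, (if i < kk ω then M ^ (i+1) - M ^ i else 0))
        = ∑ i ∈ Finset.range (kk ω), (M ^ (i+1) - M ^ i) := by
      rw [← Finset.sum_filter]
      congr 1
      ext x
      simp only [Finset.mem_filter, Finset.mem_range]
      exact ⟨fun h => h.2, fun h => ⟨lt_of_lt_of_le h (kk_le ω), h⟩⟩
    rw [h1, Finset.sum_range_sub (fun i => M ^ i), pow_zero]
    ring
  calc (∑ ω : Fin m → Bool, Pw M ω * M ^ kk ω)
      = ∑ ω : Fin m → Bool, (Pw M ω + ∑ i ∈ Finset.range m,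
          (if i < kk ω then Pw M ω * (M ^ (i+1) - M ^ i) else 0)) := by
        refine Finset.sum_congr rfl fun ω _ => ?_
        rw [hpow ω, mul_add, mul_one, Finset.mul_sum]
        congr 1
        exact Finset.sum_congr rfl fun i _ => by rw [mul_ite, mul_zero]
    _ = (∑ ω : Fin m → Bool, Pw M ω) + ∑ i ∈ Finset.range m,
          ∑ ω : Fin m → Bool, (if i < kk ω then Pw M ω * (M ^ (i+1) - M ^ i) else 0) := by
        rw [Finset.sum_add_distrib, Finset.sum_comm]
    _ = 1 + ∑ i ∈ Finset.range m, (1 - 1 / M) := by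
        rw [sum_Pw]
        congr 1
        refine Finset.sum_congr rfl fun i hi => ?_
        have him : i < m := Finset.mem_range.mp hi
        have hterm : ∀ ω : Fin m → Bool,
            (if i < kk ω then Pw M ω * (M ^ (i+1) - M ^ i) else 0)
              = (if (∀ j : Fin m, (j : ℕ) < i + 1 → ω j = true) then Pw M ω else 0)
                  * (M ^ (i+1) - M ^ i) := by
          intro ω
          by_cases hc : i < kk ω
          · rw [if_pos hc, if_pos ((lt_kk_iff ω him).mp hc)]
          · rw [if_neg hc, if_neg (fun h => hc ((lt_kk_iff ω him).mpr h)), zero_mul]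
        rw [Finset.sum_congr rfl fun ω _ => hterm ω, ← Finset.sum_mul,
          sum_prefix M (by omega : i + 1 ≤ m)]
        rw [div_pow, one_pow]
        field_simp
        ring
    _ = m * (1 - 1 / M) + 1 := by
        rw [Finset.sum_const, Finset.card_range, nsmul_eq_mul]
        ring

lemma sum_stopped {m : ℕ} (hM : 1 < M) (τ : (Fin m → Bool) → ℕ)
    (hτm : ∀ ω, τ ω ≤ m)
    (H : ∀ i : ℕ, i < m → ∀ ω ω' : Fin m → Bool,
      (∀ j : Fin m, (j : ℕ) < i → ω j = ω' j) → (τ ω ≤ i ↔ τ ω' ≤ i)) :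
    (∑ ω : Fin m → Bool, Pw M ω * Y M m (τ ω) ω) = 1 := by
  classical
  have hDzero : ∀ i : ℕ, i < m → (∑ ω : Fin m → Bool,
      (if i < τ ω then Pw M ω * (Y M m (i+1) ω - Y M m i ω) else 0)) = 0 := by
    intro i him
    set φ : (Fin m → Bool) → (Fin m → Bool) :=
      fun ω j => if (j : ℕ) < i then ω j else false with hφ
    rw [← Finset.sum_fiberwise univ φ
      (fun ω => if i < τ ω then Pw M ω * (Y M m (i+1) ω - Y M m i ω) else 0)]
    refine Finset.sum_eq_zero fun y _ => ?_
    by_cases hy : ∀ j : Fin m, ¬ ((j : ℕ) < i) → y j = false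
    · have hfib : ∀ ω : Fin m → Bool,
          φ ω = y ↔ ∀ j : Fin m, (j : ℕ) < i → ω j = y j := by
        intro ω
        constructor
        · intro h j hj
          rw [← h]; simp [hφ, hj]
        · intro h
          funext j
          by_cases hj : (j : ℕ) < i
          · simp [hφ, hj, h j hj]
          · simp [hφ, hj, (hy j hj).symm]
      have hsum0 : (∑ ω ∈ univ.filter (fun ω => φ ω = y),
          Pw M ω * (Y M m (i+1) ω - Y M m i ω)) = 0 := by
        rw [Finset.sum_filter]
        calc (∑ ω : Fin m → Bool,
              if φ ω = y then Pw M ω * (Y M m (i+1) ω - Y M m i ω) else 0)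
            = ∑ ω : Fin m → Bool,
              (if (∀ j : Fin m, (j : ℕ) < i → ω j = y j) then
                Pw M ω * (Y M m (i+1) ω - Y M m i ω) else 0) :=
              Finset.sum_congr rfl fun ω _ => if_congr (hfib ω) rfl rfl
          _ = 0 := cylinder_increment hM him y
      by_cases ht : i < τ y
      · calc (∑ ω ∈ univ.filter (fun ω => φ ω = y),
            (if i < τ ω then Pw M ω * (Y M m (i+1) ω - Y M m i ω) else 0))
            = ∑ ω ∈ univ.filter (fun ω => φ ω = y),
                Pw M ω * (Y M m (i+1) ω - Y M m i ω) := by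
              refine Finset.sum_congr rfl fun ω hω => ?_
              have hmem := (Finset.mem_filter.mp hω).2
              have hpref := (hfib ω).mp hmem
              have hiff := H i him ω y hpref
              exact if_pos (by omega : i < τ ω)
          _ = 0 := hsum0
      · refine Finset.sum_eq_zero fun ω hω => ?_
        have hmem := (Finset.mem_filter.mp hω).2
        have hpref := (hfib ω).mp hmem
        have hiff := H i him ω y hpref
        exact if_neg (by omega : ¬ i < τ ω)
    · push_neg at hy
      obtain ⟨j0, hj0, hj0f⟩ := hy
      have hyt : y j0 = true := by
        cases hb : y j0
        · exact absurd hb hj0f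
        · rfl
      refine Finset.sum_eq_zero fun ω hω => ?_
      exfalso
      have hmem := (Finset.mem_filter.mp hω).2
      have : φ ω j0 = y j0 := by rw [hmem]
      rw [hyt] at this
      have hlt : ¬ ((j0 : ℕ) < i) := not_lt.mpr hj0
      simp [hφ, hlt] at this
  have hY : ∀ ω : Fin m → Bool, Y M m (τ ω) ω
      = 1 + ∑ i ∈ Finset.range m,
          (if i < τ ω then (Y M m (i+1) ω - Y M m i ω) else 0) := by
    intro ω
    have h0 : Y M m 0 ω = 1 := by simp [Y]
    have h1 : (∑ i ∈ Finset.range m,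
          (if i < τ ω then (Y M m (i+1) ω - Y M m i ω) else 0))
        = ∑ i ∈ Finset.range (τ ω), (Y M m (i+1) ω - Y M m i ω) := by
      rw [← Finset.sum_filter]
      congr 1
      ext x
      simp only [Finset.mem_filter, Finset.mem_range]
      exact ⟨fun h => h.2, fun h => ⟨lt_of_lt_of_le h (hτm ω), h⟩⟩
    rw [h1, Finset.sum_range_sub (fun i => Y M m i ω), h0]
    ring
  calc (∑ ω : Fin m → Bool, Pw M ω * Y M m (τ ω) ω)
      = ∑ ω : Fin m → Bool, (Pw M ω + ∑ i ∈ Finset.range m,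
          (if i < τ ω then Pw M ω * (Y M m (i+1) ω - Y M m i ω) else 0)) := by
        refine Finset.sum_congr rfl fun ω _ => ?_
        rw [hY ω, mul_add, mul_one, Finset.mul_sum]
        congr 1
        exact Finset.sum_congr rfl fun i _ => by rw [mul_ite, mul_zero]
    _ = (∑ ω : Fin m → Bool, Pw M ω) + ∑ i ∈ Finset.range m,
          ∑ ω : Fin m → Bool,
            (if i < τ ω then Pw M ω * (Y M m (i+1) ω - Y M m i ω) else 0) := by
        rw [Finset.sum_add_distrib, Finset.sum_comm]
    _ = 1 := by
        rw [sum_Pw, Finset.sum_eq_zero (fun i hi => hDzero i (Finset.mem_range.mp hi)),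
          add_zero]

lemma sup'_eq {n : ℕ} (hn : 1 ≤ n) (hM : 1 < M) (ω : Fin (n-1) → Bool)
    (ne : (univ : Finset (Fin n)).Nonempty) :
    univ.sup' ne (fun i : Fin n => Y M (n-1) (i : ℕ) ω) = M ^ kk ω := by
  have hMpos : (0:ℝ) < M := lt_trans one_pos hM
  apply le_antisymm
  · apply Finset.sup'_le
    intro i _
    rw [Y]
    split_ifs with h
    · apply pow_le_pow_right₀ (le_of_lt hM)
      exact le_kk ω (by omega : (i : ℕ) ≤ n - 1) h
    · positivity
  · have hkk : kk ω < n := lt_of_le_of_lt (kk_le ω) (by omega)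
    have hle := Finset.le_sup' (fun i : Fin n => Y M (n-1) (i : ℕ) ω)
      (Finset.mem_univ (⟨kk ω, hkk⟩ : Fin n))
    have : Y M (n-1) ((⟨kk ω, hkk⟩ : Fin n) : ℕ) ω = M ^ kk ω :=
      if_pos (kk_prefix ω)
    rwa [this] at hle

end MCPG


open MCPG in
/-- The multiplicative Markov-chain prophet instance:
`X 0 = 1` and `X i = M^i` iff the first `i` i.i.d. Bernoulli(1/M) variables
(encoded as `ω : Fin (n-1) → Bool`) are all successes, and `0` otherwise.
(a) `(X i)` is a martingale with respect to its natural filtration (stated on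
the prefix cylinders generating the filtration), and every stopping time `τ`
with values in `{0,…,n-1}` for that filtration has `E[X_τ] = 1`;
(b) `E[maxᵢ Xᵢ] = (n-1)(1 - 1/M) + 1`. Consequently, for every such stopping
time the ratio of the prophet's expected value to the expected stopped value
equals `(n-1)(1 - 1/M) + 1`. -/
theorem multiplicative_chain_martingale_and_prophet_gap
    (n : ℕ) (hn : 1 ≤ n) (M : ℝ) (hM : 1 < M)
    (P : (Fin (n - 1) → Bool) → ℝ)
    (hP : ∀ ω, P ω = ∏ j : Fin (n - 1), (if ω j then 1 / M else 1 - 1 / M))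
    (X : Fin n → (Fin (n - 1) → Bool) → ℝ)
    (hX : ∀ i ω, X i ω =
      if ∀ j : Fin (n - 1), (j : ℕ) < (i : ℕ) → ω j = true then M ^ (i : ℕ) else 0) :
    -- (a) martingale property over the prefix cylinders of the natural filtration
    (∀ (i : Fin n) (hi : (i : ℕ) + 1 < n) (y : Fin (n - 1) → Bool),
      (∑ ω, if ∀ j : Fin (n - 1), (j : ℕ) < (i : ℕ) → ω j = y j then
          P ω * (X ⟨(i : ℕ) + 1, hi⟩ ω - X i ω) else 0) = 0) ∧
    -- (a) every stopping time obtains expected value exactly 1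
    (∀ τ : (Fin (n - 1) → Bool) → Fin n,
      (∀ (i : Fin n) (ω ω' : Fin (n - 1) → Bool),
        (∀ j : Fin (n - 1), (j : ℕ) < (i : ℕ) → ω j = ω' j) →
        (τ ω ≤ i ↔ τ ω' ≤ i)) →
      (∑ ω, P ω * X (τ ω) ω) = 1) ∧
    -- (b) the prophet's expected value
    (∑ ω, P ω *
        ((Finset.univ.sup'
          (Finset.univ_nonempty_iff.mpr (Fin.pos_iff_nonempty.mp hn))
          (fun i => X i ω))))
      = ((n : ℝ) - 1) * (1 - 1 / M) + 1 ∧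
    -- consequently, the prophet-to-algorithm ratio
    (∀ τ : (Fin (n - 1) → Bool) → Fin n,
      (∀ (i : Fin n) (ω ω' : Fin (n - 1) → Bool),
        (∀ j : Fin (n - 1), (j : ℕ) < (i : ℕ) → ω j = ω' j) →
        (τ ω ≤ i ↔ τ ω' ≤ i)) →
      (∑ ω, P ω *
          ((Finset.univ.sup'
            (Finset.univ_nonempty_iff.mpr (Fin.pos_iff_nonempty.mp hn))
            (fun i => X i ω)))) / (∑ ω, P ω * X (τ ω) ω)
        = ((n : ℝ) - 1) * (1 - 1 / M) + 1) := by
  have hP' : ∀ ω, P ω = Pw M ω := fun ω => by rw [hP]; rfl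
  have hX' : ∀ (i : Fin n) ω, X i ω = Y M (n - 1) (i : ℕ) ω := fun i ω => by
    rw [hX]; rfl
  have h1 : ∀ (i : Fin n) (hi : (i : ℕ) + 1 < n) (y : Fin (n - 1) → Bool),
      (∑ ω, if ∀ j : Fin (n - 1), (j : ℕ) < (i : ℕ) → ω j = y j then
          P ω * (X ⟨(i : ℕ) + 1, hi⟩ ω - X i ω) else 0) = 0 := by
    intro i hi y
    have him : (i : ℕ) < n - 1 := by omega
    calc (∑ ω, if ∀ j : Fin (n - 1), (j : ℕ) < (i : ℕ) → ω j = y j then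
          P ω * (X ⟨(i : ℕ) + 1, hi⟩ ω - X i ω) else 0)
        = ∑ ω : Fin (n-1) → Bool,
            (if ∀ j : Fin (n - 1), (j : ℕ) < (i : ℕ) → ω j = y j then
              Pw M ω * (Y M (n-1) ((i : ℕ) + 1) ω - Y M (n-1) (i : ℕ) ω) else 0) := by
          refine Finset.sum_congr rfl fun ω _ => ?_
          rw [hP' ω, hX' ⟨(i : ℕ) + 1, hi⟩ ω, hX' i ω]
      _ = 0 := cylinder_increment hM him y
  have h2 : ∀ τ : (Fin (n - 1) → Bool) → Fin n,
      (∀ (i : Fin n) (ω ω' : Fin (n - 1) → Bool),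
        (∀ j : Fin (n - 1), (j : ℕ) < (i : ℕ) → ω j = ω' j) →
        (τ ω ≤ i ↔ τ ω' ≤ i)) →
      (∑ ω, P ω * X (τ ω) ω) = 1 := by
    intro τ hτ
    have H : ∀ i : ℕ, i < n - 1 → ∀ ω ω' : Fin (n-1) → Bool,
        (∀ j : Fin (n-1), (j : ℕ) < i → ω j = ω' j) →
        (((τ ω : ℕ)) ≤ i ↔ ((τ ω' : ℕ)) ≤ i) := by
      intro i hi ω ω' hpref
      have hin : i < n := by omega
      have h := hτ ⟨i, hin⟩ ω ω' hpref
      simpa [Fin.le_def] using h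
    have hτm : ∀ ω, (τ ω : ℕ) ≤ n - 1 := fun ω => by
      have := (τ ω).isLt; omega
    calc (∑ ω, P ω * X (τ ω) ω)
        = ∑ ω : Fin (n-1) → Bool, Pw M ω * Y M (n-1) ((τ ω : ℕ)) ω := by
          refine Finset.sum_congr rfl fun ω _ => ?_
          rw [hP' ω, hX' (τ ω) ω]
      _ = 1 := sum_stopped hM (fun ω => (τ ω : ℕ)) hτm H
  have h3 : (∑ ω, P ω *
        ((Finset.univ.sup'
          (Finset.univ_nonempty_iff.mpr (Fin.pos_iff_nonempty.mp hn))
          (fun i => X i ω))))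
      = ((n : ℝ) - 1) * (1 - 1 / M) + 1 := by
    have hsup : ∀ ω : Fin (n-1) → Bool,
        (Finset.univ.sup'
          (Finset.univ_nonempty_iff.mpr (Fin.pos_iff_nonempty.mp hn))
          (fun i => X i ω)) = M ^ kk ω := by
      intro ω
      have hfe : (fun i : Fin n => X i ω) = (fun i : Fin n => Y M (n-1) (i : ℕ) ω) :=
        funext fun i => hX' i ω
      rw [hfe]
      exact sup'_eq hn hM ω _
    calc (∑ ω, P ω *
        ((Finset.univ.sup'
          (Finset.univ_nonempty_iff.mpr (Fin.pos_iff_nonempty.mp hn))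
          (fun i => X i ω))))
        = ∑ ω : Fin (n-1) → Bool, Pw M ω * M ^ kk ω :=
          Finset.sum_congr rfl fun ω _ => by rw [hP' ω, hsup ω]
      _ = ((n - 1 : ℕ) : ℝ) * (1 - 1 / M) + 1 := sum_prophet hM
      _ = ((n : ℝ) - 1) * (1 - 1 / M) + 1 := by
          rw [Nat.cast_sub hn, Nat.cast_one]
  refine ⟨h1, h2, h3, fun τ hτ => ?_⟩
  rw [h2 τ hτ, div_one, h3]
end

section
/- Let m ∈ ℕ, p ∈ [0,1], and let z ∈ ℝ with z ≥ 0 and m·p ≥ 2z. If X is a Binomial(m, p) random variable, then E[max{z - X, 0}] ≤ 2. -/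
open Finset

lemma binom_eval_sum (m : ℕ) (p : ℝ) :
    (∑ k ∈ range (m + 1), (m.choose k : ℝ) * p ^ k * (1 - p) ^ (m - k)) = 1 := by
  have h := congrArg (Polynomial.eval p) (bernsteinPolynomial.sum ℝ m)
  simpa [bernsteinPolynomial, Polynomial.eval_finset_sum] using h

lemma binom_eval_var (m : ℕ) (p : ℝ) :
    (∑ k ∈ range (m + 1),
        (m.choose k : ℝ) * p ^ k * (1 - p) ^ (m - k) * ((m : ℝ) * p - k) ^ 2)
      = (m : ℝ) * p * (1 - p) := by
  have h := congrArg (Polynomial.eval p) (bernsteinPolynomial.variance ℝ m)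
  simp [bernsteinPolynomial, Polynomial.eval_finset_sum] at h
  rw [← h]
  apply Finset.sum_congr rfl
  intro k _
  ring

/-- If `X ∼ Binomial(m, p)` and `0 ≤ z` with `m·p ≥ 2z`,
then `E[max{z - X, 0}] ≤ 2`, where the expectation is written out via the
binomial probability mass function. -/
theorem binomial_deficit_bound
    (m : ℕ) (p : ℝ) (hp0 : 0 ≤ p) (hp1 : p ≤ 1)
    (z : ℝ) (hz : 0 ≤ z) (hmp : 2 * z ≤ (m : ℝ) * p) :
    (∑ k ∈ Finset.range (m + 1),
        (m.choose k : ℝ) * p ^ k * (1 - p) ^ (m - k) * max (z - (k : ℝ)) 0) ≤ 2 := by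
  have hpmf : ∀ k : ℕ, 0 ≤ (m.choose k : ℝ) * p ^ k * (1 - p) ^ (m - k) := by
    intro k
    have h1 : (0:ℝ) ≤ 1 - p := by linarith
    positivity
  by_cases hz2 : z ≤ 2
  · calc (∑ k ∈ Finset.range (m + 1),
        (m.choose k : ℝ) * p ^ k * (1 - p) ^ (m - k) * max (z - (k : ℝ)) 0)
        ≤ ∑ k ∈ Finset.range (m + 1),
          (m.choose k : ℝ) * p ^ k * (1 - p) ^ (m - k) * z := by
          apply Finset.sum_le_sum
          intro k _
          apply mul_le_mul_of_nonneg_left _ (hpmf k)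
          apply max_le _ hz
          have : (0:ℝ) ≤ k := Nat.cast_nonneg k
          linarith
      _ = z := by rw [← Finset.sum_mul, binom_eval_sum m p, one_mul]
      _ ≤ 2 := hz2
  · push_neg at hz2
    set c : ℝ := (m : ℝ) * p with hc
    have hcz : z < c := by linarith
    have hczpos : 0 < c - z := by linarith
    calc (∑ k ∈ Finset.range (m + 1),
        (m.choose k : ℝ) * p ^ k * (1 - p) ^ (m - k) * max (z - (k : ℝ)) 0)
        ≤ ∑ k ∈ Finset.range (m + 1),
          z / (c - z) ^ 2 *
            ((m.choose k : ℝ) * p ^ k * (1 - p) ^ (m - k) * (c - k) ^ 2) := by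
          apply Finset.sum_le_sum
          intro k _
          have hq : max (z - (k : ℝ)) 0 ≤ z * (c - k) ^ 2 / (c - z) ^ 2 := by
            rcases le_or_gt z (k : ℝ) with h | h
            · have : max (z - (k : ℝ)) 0 = 0 := max_eq_right (by linarith)
              rw [this]; positivity
            · have : max (z - (k : ℝ)) 0 = z - k := max_eq_left (by linarith)
              rw [this, le_div_iff₀ (by positivity)]
              have hck : c - z ≤ c - (k : ℝ) := by linarith
              have hsq : (c - z) ^ 2 ≤ (c - (k : ℝ)) ^ 2 :=
                pow_le_pow_left₀ (le_of_lt hczpos) hck 2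
              nlinarith [mul_le_mul_of_nonneg_right
                  (show z - (k : ℝ) ≤ z by have : (0:ℝ) ≤ k := Nat.cast_nonneg k; linarith) (sq_nonneg (c - z)),
                mul_le_mul_of_nonneg_left hsq hz]
          calc (m.choose k : ℝ) * p ^ k * (1 - p) ^ (m - k) * max (z - (k : ℝ)) 0
              ≤ (m.choose k : ℝ) * p ^ k * (1 - p) ^ (m - k) *
                (z * (c - k) ^ 2 / (c - z) ^ 2) :=
                mul_le_mul_of_nonneg_left hq (hpmf k)
            _ = z / (c - z) ^ 2 *
                ((m.choose k : ℝ) * p ^ k * (1 - p) ^ (m - k) * (c - k) ^ 2) := by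
                field_simp
      _ = z / (c - z) ^ 2 * (c * (1 - p)) := by
          rw [← Finset.mul_sum, binom_eval_var m p]
      _ ≤ 2 := by
          rw [div_mul_eq_mul_div, div_le_iff₀ (by positivity)]
          nlinarith [mul_nonneg hz (by linarith : (0:ℝ) ≤ c - 2*z),
            mul_nonneg (mul_nonneg hz (by linarith : (0:ℝ) ≤ c)) hp0]
end

section
/- Let Ω' be a finite nonempty set with |Ω'| = m, let p : Ω' → ℝ_{≥0} satisfy ∑_{t∈Ω'} p(t) = 1, let Δ ≥ 0, and define q(t) := max{p(t), e^{-Δ/2}}. Then for every t ∈ Ω': q(t)/∑_{u∈Ω'} q(u) ≥ (1 - m·e^{-Δ/2})·p(t). -/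
/-- Softmax domination for truncated potentials: if `p` is a
probability mass function on a finite set `Ω'` of size `m` and
`q(t) = max{p(t), e^{-Δ/2}}`, then for every `t`,
`q(t)/∑_u q(u) ≥ (1 - m·e^{-Δ/2})·p(t)`. -/
theorem truncated_softmax_domination
    {Ω' : Type} [Fintype Ω'] [Nonempty Ω']
    (m : ℕ) (hm : Fintype.card Ω' = m)
    (p : Ω' → ℝ) (hp0 : ∀ t, 0 ≤ p t) (hp1 : ∑ t, p t = 1)
    (Δ : ℝ) (hΔ : 0 ≤ Δ)
    (q : Ω' → ℝ) (hq : ∀ t, q t = max (p t) (Real.exp (-(Δ / 2)))) :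
    ∀ t, q t / (∑ u, q u) ≥ (1 - (m : ℝ) * Real.exp (-(Δ / 2))) * p t := by
  intro t
  set e := Real.exp (-(Δ / 2)) with he
  have he0 : 0 < e := Real.exp_pos _
  have hqle : ∀ u, q u ≤ p u + e := by
    intro u
    rw [hq u]
    exact max_le (by linarith [he0.le]) (by linarith [hp0 u])
  have hSle : (∑ u, q u) ≤ 1 + (m : ℝ) * e := by
    calc (∑ u, q u) ≤ ∑ u, (p u + e) := Finset.sum_le_sum fun u _ => hqle u
      _ = 1 + (m : ℝ) * e := by
          rw [Finset.sum_add_distrib, hp1, Finset.sum_const, Finset.card_univ, hm,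
            nsmul_eq_mul]
  have hSpos : 0 < ∑ u, q u := by
    refine Finset.sum_pos (fun u _ => ?_) Finset.univ_nonempty
    rw [hq u]; exact lt_of_lt_of_le he0 (le_max_right _ _)
  have hqt : p t ≤ q t := by rw [hq t]; exact le_max_left _ _
  have h1 : p t / (1 + (m : ℝ) * e) ≤ q t / (∑ u, q u) := by
    apply div_le_div₀ (le_trans (hp0 t) hqt) hqt hSpos hSle
  have hme : 0 ≤ (m : ℝ) * e := by positivity
  have h2 : (1 - (m : ℝ) * e) * p t ≤ p t / (1 + (m : ℝ) * e) := by
    rw [le_div_iff₀ (by linarith)]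
    have : (1 - (m : ℝ) * e) * (1 + (m : ℝ) * e) ≤ 1 := by nlinarith
    nlinarith [hp0 t]
  exact le_trans h2 h1
end

section
/- Fix an integer n ≥ 1 and reals M > 1 and p ∈ [0,1]. Let B_2, …, B_n be i.i.d. Bernoulli(1/M), define X_1 := 1 and X_i := M·X_{i-1}·B_i for 2 ≤ i ≤ n, and let Z_1, …, Z_n be i.i.d. Bernoulli(p) random variables independent of (B_2, …, B_n). Then E[max_{1≤i≤n} Z_i·X_i] ≤ p·n. -/
private lemma sum_pi_bool {k : ℕ} (g : Fin k → Bool → ℝ) :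
    ∑ f : Fin k → Bool, ∏ j, g j (f j) = ∏ j, (g j false + g j true) := by
  rw [← Fintype.piFinset_univ, Finset.sum_prod_piFinset]
  congr 1; funext j
  simp [Fintype.sum_bool, add_comm]

private lemma sum_sum_sum_comm {α β γ : Type*} [Fintype α] [Fintype β] [Fintype γ]
    (f : α → β → γ → ℝ) :
    ∑ a : α, ∑ b : β, ∑ c : γ, f a b c = ∑ c : γ, ∑ a : α, ∑ b : β, f a b c := by
  calc ∑ a : α, ∑ b : β, ∑ c : γ, f a b c
      = ∑ a : α, ∑ c : γ, ∑ b : β, f a b c :=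
        Finset.sum_congr rfl fun a _ => Finset.sum_comm
    _ = ∑ c : γ, ∑ a : α, ∑ b : β, f a b c := Finset.sum_comm

/-- For the multiplicative Markov-chain instance
(`X 0 = 1`, `X i = M^i` iff the first `i` i.i.d. Bernoulli(1/M) variables
`ω : Fin (n-1) → Bool` all succeed, else `0`) and independent i.i.d.
Bernoulli(p) sampling indicators `ζ : Fin n → Bool`, the expected maximum of
the sampled values satisfies `E[maxᵢ ζᵢ·Xᵢ] ≤ p·n`. -/
theorem p_sample_prophet_value_bound
    (n : ℕ) (hn : 1 ≤ n) (M : ℝ) (hM : 1 < M)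
    (p : ℝ) (hp0 : 0 ≤ p) (hp1 : p ≤ 1)
    (X : Fin n → (Fin (n - 1) → Bool) → ℝ)
    (hX : ∀ i ω, X i ω =
      if ∀ j : Fin (n - 1), (j : ℕ) < (i : ℕ) → ω j = true then M ^ (i : ℕ) else 0) :
    (∑ ω : Fin (n - 1) → Bool, ∑ ζ : Fin n → Bool,
        (∏ j : Fin (n - 1), (if ω j then 1 / M else 1 - 1 / M)) *
        (∏ i : Fin n, (if ζ i then p else 1 - p)) *
        (Finset.univ.sup'
          (Finset.univ_nonempty_iff.mpr (Fin.pos_iff_nonempty.mp hn))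
          (fun i => (if ζ i then (1 : ℝ) else 0) * X i ω)))
      ≤ p * n := by
  have hM0 : (0:ℝ) < M := lt_trans one_pos hM
  have hinv : M⁻¹ ≤ 1 := inv_le_one_of_one_le₀ hM.le
  have hwω : ∀ b : Bool, (0:ℝ) ≤ (if b then 1 / M else 1 - 1 / M) := by
    intro b; cases b
    · simp only [Bool.false_eq_true, if_false, sub_nonneg, one_div]; exact hinv
    · simp only [if_true]; positivity
  have hwζ : ∀ b : Bool, (0:ℝ) ≤ (if b then p else 1 - p) := by
    intro b; cases b <;> simp [hp0, hp1]
  have hXnn : ∀ i ω, 0 ≤ X i ω := by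
    intro i ω; rw [hX]; split <;> positivity
  -- Step 1: bound the sup' by the sum over i
  have step1 : ∀ (ω : Fin (n-1) → Bool) (ζ : Fin n → Bool),
      (Finset.univ.sup'
          (Finset.univ_nonempty_iff.mpr (Fin.pos_iff_nonempty.mp hn))
          (fun i => (if ζ i then (1 : ℝ) else 0) * X i ω))
      ≤ ∑ i : Fin n, (if ζ i then (1:ℝ) else 0) * X i ω := by
    intro ω ζ
    apply Finset.sup'_le
    intro i _
    apply Finset.single_le_sum (fun j _ => ?_) (Finset.mem_univ i)
    have := hXnn j ω
    split <;> simp [this]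
  -- Step 2: for each i, the ζ-expectation of the indicator is p
  have stepA : ∀ i : Fin n,
      (∑ ζ : Fin n → Bool, (∏ i' : Fin n, (if ζ i' then p else 1 - p)) *
        (if ζ i then (1:ℝ) else 0)) = p := by
    intro i
    have key : ∀ ζ : Fin n → Bool,
        (∏ i' : Fin n, (if ζ i' then p else 1 - p)) * (if ζ i then (1:ℝ) else 0)
        = ∏ j : Fin n, ((if ζ j then p else 1 - p) *
            (if j = i then (if ζ j then (1:ℝ) else 0) else 1)) := by
      intro ζ
      rw [Finset.prod_mul_distrib]
      congr 1
      rw [Finset.prod_ite_eq' Finset.univ i (fun j => if ζ j then (1:ℝ) else 0)]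
      simp
    simp only [key]
    rw [sum_pi_bool (fun j b => (if b then p else 1 - p) *
          (if j = i then (if b then (1:ℝ) else 0) else 1))]
    trans (∏ j : Fin n, if j = i then p else 1)
    · exact Finset.prod_congr rfl fun j _ => by
        by_cases h : j = i <;> simp [h]
    · rw [Finset.prod_ite_eq' Finset.univ i (fun _ => p)]; simp
  -- Step 3: for each i, the ω-expectation of X i is 1
  have stepB : ∀ i : Fin n,
      (∑ ω : Fin (n-1) → Bool, (∏ j : Fin (n-1), (if ω j then 1 / M else 1 - 1 / M)) *
        X i ω) = 1 := by
    intro i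
    have key : ∀ ω : Fin (n-1) → Bool,
        (∏ j : Fin (n-1), (if ω j then 1 / M else 1 - 1 / M)) * X i ω
        = M ^ (i:ℕ) * ∏ j : Fin (n-1), ((if ω j then 1 / M else 1 - 1 / M) *
            (if (j:ℕ) < (i:ℕ) then (if ω j then (1:ℝ) else 0) else 1)) := by
      intro ω
      rw [Finset.prod_mul_distrib, hX]
      have hind : (∏ j : Fin (n-1), (if (j:ℕ) < (i:ℕ) then (if ω j then (1:ℝ) else 0) else 1))
          = if ∀ j : Fin (n - 1), (j : ℕ) < (i : ℕ) → ω j = true then 1 else 0 := by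
        by_cases hall : ∀ j : Fin (n - 1), (j : ℕ) < (i : ℕ) → ω j = true
        · rw [if_pos hall]
          apply Finset.prod_eq_one
          intro j _
          by_cases hj : (j:ℕ) < (i:ℕ)
          · simp [hj, hall j hj]
          · simp [hj]
        · rw [if_neg hall]
          push_neg at hall
          obtain ⟨j, hj1, hj2⟩ := hall
          apply Finset.prod_eq_zero (Finset.mem_univ j)
          simp [hj1, hj2]
      rw [hind]
      split <;> ring
    simp only [key]
    rw [← Finset.mul_sum,
        sum_pi_bool (fun j b => (if b then 1 / M else 1 - 1 / M) *
          (if (j:ℕ) < (i:ℕ) then (if b then (1:ℝ) else 0) else 1))]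
    have hmid : (∏ j : Fin (n-1), ((if (false:Bool) then 1 / M else 1 - 1 / M) *
          (if (j:ℕ) < (i:ℕ) then (if (false:Bool) then (1:ℝ) else 0) else 1)
        + (if (true:Bool) then 1 / M else 1 - 1 / M) *
          (if (j:ℕ) < (i:ℕ) then (if (true:Bool) then (1:ℝ) else 0) else 1)))
        = ∏ j : Fin (n-1), (if (j:ℕ) < (i:ℕ) then 1/M else (1:ℝ)) :=
      Finset.prod_congr rfl fun j _ => by
        by_cases h : (j:ℕ) < (i:ℕ) <;> simp [h]
    rw [hmid]
    have hprod : (∏ j : Fin (n-1), (if (j:ℕ) < (i:ℕ) then 1/M else (1:ℝ))) = (1/M) ^ (i:ℕ) := by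
      rw [Fin.prod_univ_eq_prod_range (fun j => if j < (i:ℕ) then 1/M else (1:ℝ)) (n-1)]
      rw [Finset.prod_ite, Finset.prod_const, Finset.prod_const, one_pow, mul_one]
      congr 1
      have hfil : (Finset.range (n-1)).filter (fun j => j < (i:ℕ)) = Finset.range (i:ℕ) := by
        ext j
        simp only [Finset.mem_filter, Finset.mem_range]
        have := i.isLt
        omega
      rw [hfil, Finset.card_range]
    rw [hprod, one_div, ← mul_pow, mul_inv_cancel₀ (ne_of_gt hM0), one_pow]
  -- Combine
  calc (∑ ω : Fin (n - 1) → Bool, ∑ ζ : Fin n → Bool,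
        (∏ j : Fin (n - 1), (if ω j then 1 / M else 1 - 1 / M)) *
        (∏ i : Fin n, (if ζ i then p else 1 - p)) *
        (Finset.univ.sup'
          (Finset.univ_nonempty_iff.mpr (Fin.pos_iff_nonempty.mp hn))
          (fun i => (if ζ i then (1 : ℝ) else 0) * X i ω)))
      ≤ ∑ ω : Fin (n - 1) → Bool, ∑ ζ : Fin n → Bool,
        (∏ j : Fin (n - 1), (if ω j then 1 / M else 1 - 1 / M)) *
        (∏ i : Fin n, (if ζ i then p else 1 - p)) *
        (∑ i : Fin n, (if ζ i then (1:ℝ) else 0) * X i ω) := by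
        apply Finset.sum_le_sum; intro ω _
        apply Finset.sum_le_sum; intro ζ _
        apply mul_le_mul_of_nonneg_left (step1 ω ζ)
        exact mul_nonneg (Finset.prod_nonneg fun j _ => hwω (ω j))
          (Finset.prod_nonneg fun i _ => hwζ (ζ i))
    _ = ∑ i : Fin n, ∑ ω : Fin (n - 1) → Bool, ∑ ζ : Fin n → Bool,
          ((∏ i' : Fin n, (if ζ i' then p else 1 - p)) * (if ζ i then (1:ℝ) else 0)) *
          ((∏ j : Fin (n - 1), (if ω j then 1 / M else 1 - 1 / M)) * X i ω) := by
        simp only [Finset.mul_sum]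
        rw [sum_sum_sum_comm]
        apply Finset.sum_congr rfl; intro i _
        apply Finset.sum_congr rfl; intro ω _
        apply Finset.sum_congr rfl; intro ζ _
        ring
    _ = ∑ i : Fin n,
          (∑ ζ : Fin n → Bool, (∏ i' : Fin n, (if ζ i' then p else 1 - p)) *
            (if ζ i then (1:ℝ) else 0)) *
          (∑ ω : Fin (n-1) → Bool, (∏ j : Fin (n-1), (if ω j then 1 / M else 1 - 1 / M)) *
            X i ω) := by
        apply Finset.sum_congr rfl; intro i _
        rw [Finset.sum_mul]
        simp only [Finset.mul_sum]
        exact Finset.sum_comm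
    _ = ∑ _i : Fin n, p * 1 := by
        apply Finset.sum_congr rfl; intro i _
        rw [stepA i, stepB i]
    _ = p * n := by simp [Finset.sum_const, mul_comm]
end
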